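/- arXiv:1507.05463 — 6 statements merged into one kernel-verified Lean document; each statement's English description precedes it below -/
import Mathlib

section
/- Let {A,C} and {B,D} be splits of a connected finite simple graph G such that |A ∩ B| ≥ 2 and A ∪ B ≠ V(G). Then {A ∩ B, C ∪ D} is a split of G. -/
open scoped Classical

/-- The set of neighbors of `X` in `V(G) ∖ X`. -/
def extNbhd {V : Type*} (G : SimpleGraph V) (X : Set V) : Set V :=
  {v | v ∉ X ∧ ∃ x ∈ X, G.Adj v x}

/-- The set of neighbors of `X ⊆ C` inside `C ∖ X`, i.e. relative to the induced
subgraph `G[C]`. -/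
def extNbhdIn {V : Type*} (G : SimpleGraph V) (C X : Set V) : Set V :=
  {v | v ∈ C ∧ v ∉ X ∧ ∃ x ∈ X, G.Adj v x}

/-- `{A, B}` is a split of `G`: a bipartition of the vertex set such that every vertex
of `N(B)` has the same neighborhood in `N(A)`. -/
def IsSplit {V : Type*} (G : SimpleGraph V) (A B : Set V) : Prop :=
  A ∪ B = Set.univ ∧ Disjoint A B ∧
    ∀ a₁ ∈ extNbhd G B, ∀ a₂ ∈ extNbhd G B, ∀ b ∈ extNbhd G A,
      (G.Adj a₁ b ↔ G.Adj a₂ b)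

/-- `{A, C ∖ A}` is a split of the induced subgraph `G[C]`. -/
def IsSplitIn {V : Type*} (G : SimpleGraph V) (C A : Set V) : Prop :=
  A ⊆ C ∧
    ∀ a₁ ∈ extNbhdIn G C (C \ A), ∀ a₂ ∈ extNbhdIn G C (C \ A),
      ∀ b ∈ extNbhdIn G C A, (G.Adj a₁ b ↔ G.Adj a₂ b)

/-- `A` is a split-module of `G`: either `A` is the whole vertex set, or empty, or there is
a connected component of `G` (with vertex set `C = c.supp`) such that `{A, C ∖ A}` is a
split of `G[C]`. -/
def IsSplitModule {V : Type*} (G : SimpleGraph V) (A : Set V) : Prop :=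
  A = Set.univ ∨ A = ∅ ∨ ∃ c : G.ConnectedComponent, IsSplitIn G c.supp A

lemma split_join {V : Type*} {G : SimpleGraph V} {A C : Set V}
    (h : IsSplit G A C) :
    ∀ a ∈ extNbhd G C, ∀ b ∈ extNbhd G A, G.Adj a b := by
  obtain ⟨hu, hd, hs⟩ := h
  intro a ha b hb
  obtain ⟨hbA, a₀, ha₀A, hadj⟩ := hb
  have hbC : b ∈ C := by
    have := Set.mem_univ b
    rw [← hu] at this
    rcases this with h' | h'
    · exact absurd h' hbA
    · exact h'
  have ha₀ : a₀ ∈ extNbhd G C :=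
    ⟨fun hc => Set.disjoint_left.mp hd ha₀A hc, b, hbC, hadj.symm⟩
  exact (hs a₀ ha₀ a ha b ⟨hbA, a₀, ha₀A, hadj⟩).mp hadj.symm

/-- The asymmetric key step. -/
lemma split_key {V : Type*} {G : SimpleGraph V} (hconn : G.Connected)
    {A C B D : Set V}
    (hAC : IsSplit G A C) (hBD : IsSplit G B D)
    (hne : A ∪ B ≠ Set.univ) :
    ∀ a ∈ A ∩ B, (∃ x, x ∉ A ∩ B ∧ G.Adj a x) →
      ∀ b, b ∉ A → (∃ z ∈ A ∩ B, G.Adj b z) → G.Adj a b := by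
  have joinA := split_join hAC
  have joinB := split_join hBD
  obtain ⟨huAC, hdAC, -⟩ := hAC
  obtain ⟨huBD, hdBD, -⟩ := hBD
  have hCA : ∀ v, v ∉ A → v ∈ C := by
    intro v hv
    have := Set.mem_univ v; rw [← huAC] at this
    rcases this with h' | h'
    · exact absurd h' hv
    · exact h'
  have hDB : ∀ v, v ∉ B → v ∈ D := by
    intro v hv
    have := Set.mem_univ v; rw [← huBD] at this
    rcases this with h' | h'
    · exact absurd h' hv
    · exact h'
  have hAC' : ∀ v, v ∈ A → v ∉ C := fun v hv => Set.disjoint_left.mp hdAC hv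
  have hBD' : ∀ v, v ∈ B → v ∉ D := fun v hv => Set.disjoint_left.mp hdBD hv
  intro a ha hax b hbA hbz
  obtain ⟨haA, haB⟩ := ha
  obtain ⟨z, ⟨hzA, hzB⟩, hbz⟩ := hbz
  have hbNA : b ∈ extNbhd G A := ⟨hbA, z, hzA, hbz⟩
  by_cases haNC : ∃ c, c ∉ A ∧ G.Adj a c
  · -- a ∈ N(C)
    obtain ⟨c, hcA, hac⟩ := haNC
    exact joinA a ⟨hAC' a haA, c, hCA c hcA, hac⟩ b hbNA
  · -- contradiction
    exfalso
    push_neg at haNC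
    -- a's outside neighbor x must be in A \ B, so a ∈ N(D)
    obtain ⟨x, hxAB, hax⟩ := hax
    have hxA : x ∈ A := by
      by_contra hxA
      exact haNC x hxA hax
    have hxB : x ∉ B := fun hxB => hxAB ⟨hxA, hxB⟩
    have haND : a ∈ extNbhd G D := ⟨hBD' a haB, x, hDB x hxB, hax⟩
    -- every vertex of N(B) is in A
    have hNBA : ∀ v, v ∈ extNbhd G B → v ∈ A := by
      intro v hv
      have hadj := joinB a haND v hv
      by_contra hvA
      exact haNC v hvA hadj
    -- z ∈ N(C)
    have hzNC : z ∈ extNbhd G C := ⟨hAC' z hzA, b, hCA b hbA, hbz.symm⟩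
    -- get w outside A ∪ B
    obtain ⟨w, hw⟩ : ∃ w, w ∉ A ∪ B := by
      by_contra h
      push_neg at h
      exact hne (Set.eq_univ_of_forall h)
    have hzAB : z ∈ A ∪ B := Or.inl hzA
    obtain ⟨d, -, hd1, hd2⟩ :=
      ((hconn w z).some).exists_boundary_dart (A ∪ B)ᶜ hw (fun h => h hzAB)
    have hyAB : d.snd ∈ A ∪ B := by by_contra h; exact hd2 h
    have hwA : d.fst ∉ A := fun h => hd1 (Or.inl h)
    have hwB : d.fst ∉ B := fun h => hd1 (Or.inr h)
    rcases hyAB with hy | hy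
    · -- d.fst ∈ N(A), hence adjacent to z ∈ B, hence in N(B) ⊆ A, contradiction
      have hwNA : d.fst ∈ extNbhd G A := ⟨hwA, d.snd, hy, d.adj⟩
      have : G.Adj z d.fst := joinA z hzNC d.fst hwNA
      exact hwA (hNBA d.fst ⟨hwB, z, hzB, this.symm⟩)
    · exact hwA (hNBA d.fst ⟨hwB, d.snd, hy, d.adj⟩)

/-- Let `{A,C}` and `{B,D}` be splits of a connected finite simple
graph `G` such that `|A ∩ B| ≥ 2` and `A ∪ B ≠ V(G)`. Then `{A ∩ B, C ∪ D}` is a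
split of `G`. -/
theorem splitIntersection {V : Type*} [Fintype V] (G : SimpleGraph V)
    (hconn : G.Connected) (A C B D : Set V)
    (hAC : IsSplit G A C) (hBD : IsSplit G B D)
    (hcard : 2 ≤ (A ∩ B).ncard) (hne : A ∪ B ≠ Set.univ) :
    IsSplit G (A ∩ B) (C ∪ D) := by
  have keyAB := split_key hconn hAC hBD hne
  have keyBA := split_key hconn hBD hAC (by rw [Set.union_comm]; exact hne)
  obtain ⟨huAC, hdAC, -⟩ := hAC
  obtain ⟨huBD, hdBD, -⟩ := hBD
  have hCA : ∀ v, v ∉ A → v ∈ C := by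
    intro v hv
    have := Set.mem_univ v; rw [← huAC] at this
    rcases this with h' | h'
    · exact absurd h' hv
    · exact h'
  have hDB : ∀ v, v ∉ B → v ∈ D := by
    intro v hv
    have := Set.mem_univ v; rw [← huBD] at this
    rcases this with h' | h'
    · exact absurd h' hv
    · exact h'
  have hAC' : ∀ v, v ∈ A → v ∉ C := fun v hv => Set.disjoint_left.mp hdAC hv
  have hBD' : ∀ v, v ∈ B → v ∉ D := fun v hv => Set.disjoint_left.mp hdBD hv
  have key : ∀ a ∈ extNbhd G (C ∪ D), ∀ b ∈ extNbhd G (A ∩ B), G.Adj a b := by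
    rintro a ⟨haCD, x, hxCD, hax⟩ b ⟨hbAB, z, ⟨hzA, hzB⟩, hbz⟩
    have haA : a ∈ A := by
      by_contra h
      exact haCD (Or.inl (hCA a h))
    have haB : a ∈ B := by
      by_contra h
      exact haCD (Or.inr (hDB a h))
    have hxAB : x ∉ A ∩ B := by
      rintro ⟨hxA, hxB⟩
      rcases hxCD with h | h
      · exact hAC' x hxA h
      · exact hBD' x hxB h
    by_cases hbA : b ∈ A
    · have hbB : b ∉ B := fun hbB => hbAB ⟨hbA, hbB⟩
      exact keyBA a ⟨haB, haA⟩ ⟨x, fun h => hxAB ⟨h.2, h.1⟩, hax⟩ b hbB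
        ⟨z, ⟨hzB, hzA⟩, hbz⟩
    · exact keyAB a ⟨haA, haB⟩ ⟨x, hxAB, hax⟩ b hbA ⟨z, ⟨hzA, hzB⟩, hbz⟩
  refine ⟨?_, ?_, ?_⟩
  · apply Set.eq_univ_of_forall
    intro v
    by_cases hvA : v ∈ A
    · by_cases hvB : v ∈ B
      · exact Or.inl ⟨hvA, hvB⟩
      · exact Or.inr (Or.inr (hDB v hvB))
    · exact Or.inr (Or.inl (hCA v hvA))
  · rw [Set.disjoint_left]
    rintro v ⟨hvA, hvB⟩ (h | h)
    · exact hAC' v hvA h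
    · exact hBD' v hvB h
  · intro a₁ h₁ a₂ h₂ b hb
    exact iff_of_true (key a₁ h₁ b hb) (key a₂ h₂ b hb)
end

section
/- If A and B are overlapping split-modules of a connected finite simple graph G = (V,E), then A ∪ B is also a split-module of G. Moreover, if additionally A ∪ B ≠ V, then A ∩ B is also a split-module of G. -/
open scoped Classical

/-- In a preconnected graph there is an edge crossing any nontrivial cut. -/
lemma cross_edge {V : Type*} {G : SimpleGraph V} (hpre : G.Preconnected)
    {X : Set V} {x y : V} (hx : x ∈ X) (hy : y ∉ X) :
    ∃ u ∈ X, ∃ v, v ∉ X ∧ G.Adj u v := by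
  obtain ⟨w⟩ := hpre x y
  obtain ⟨d, _, h1, h2⟩ := w.exists_boundary_dart X hx hy
  exact ⟨d.fst, h1, d.snd, h2, d.adj⟩

/-- The key property of a split: every boundary vertex of `A` is adjacent to every
external neighbor of `A`. -/
lemma key_of_splitIn {V : Type*} {G : SimpleGraph V} {A : Set V}
    (h : IsSplitIn G Set.univ A) {a c b u : V}
    (ha : a ∈ A) (hc : c ∉ A) (hac : G.Adj a c)
    (hb : b ∉ A) (hu : u ∈ A) (hbu : G.Adj b u) : G.Adj a b := by
  have hu' : u ∈ extNbhdIn G Set.univ (Set.univ \ A) := by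
    refine ⟨trivial, ?_, b, ⟨trivial, hb⟩, hbu.symm⟩
    simp [hu]
  have ha' : a ∈ extNbhdIn G Set.univ (Set.univ \ A) := by
    refine ⟨trivial, ?_, c, ⟨trivial, hc⟩, hac⟩
    simp [ha]
  have hb' : b ∈ extNbhdIn G Set.univ A := ⟨trivial, hb, u, hu, hbu⟩
  exact (h.2 u hu' a ha' b hb').mp hbu.symm

/-- Conversely, the key property implies being a split (of the whole graph). -/
lemma splitIn_of_key {V : Type*} {G : SimpleGraph V} {X : Set V}
    (h : ∀ a ∈ X, ∀ c, c ∉ X → G.Adj a c → ∀ b, b ∉ X → ∀ u ∈ X, G.Adj b u → G.Adj a b) :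
    IsSplitIn G Set.univ X := by
  refine ⟨Set.subset_univ X, ?_⟩
  rintro a₁ ⟨-, ha₁, c₁, hc₁, hac₁⟩ a₂ ⟨-, ha₂, c₂, hc₂, hac₂⟩ b ⟨-, hb, u, hu, hbu⟩
  have ha₁' : a₁ ∈ X := by simpa using ha₁
  have ha₂' : a₂ ∈ X := by simpa using ha₂
  constructor
  · intro _; exact h a₂ ha₂' c₂ hc₂.2 hac₂ b hb u hu hbu
  · intro _; exact h a₁ ha₁' c₁ hc₁.2 hac₁ b hb u hu hbu

lemma supp_eq_univ {V : Type*} {G : SimpleGraph V} (hconn : G.Connected)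
    (c : G.ConnectedComponent) : c.supp = Set.univ := by
  obtain ⟨w, rfl⟩ := c.exists_rep
  ext v
  simp only [SimpleGraph.ConnectedComponent.mem_supp_iff, Set.mem_univ, iff_true]
  exact SimpleGraph.ConnectedComponent.sound (hconn.preconnected v w)

lemma key_of_module {V : Type*} {G : SimpleGraph V} (hconn : G.Connected) {A : Set V}
    (hA : IsSplitModule G A) (hne : A.Nonempty) (hproper : A ≠ Set.univ) :
    ∀ a ∈ A, ∀ c, c ∉ A → G.Adj a c → ∀ b, b ∉ A → ∀ u ∈ A, G.Adj b u → G.Adj a b := by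
  rcases hA with h | h | ⟨co, h⟩
  · exact absurd h hproper
  · obtain ⟨x, hx⟩ := hne
    rw [h] at hx
    exact absurd hx (Set.notMem_empty x)
  · rw [supp_eq_univ hconn] at h
    intro a ha c hc hac b hb u hu hbu
    exact key_of_splitIn h ha hc hac hb hu hbu

section Cases

variable {V : Type*} {G : SimpleGraph V} {A B : Set V}

/-- The asymmetric case in the union proof: `a ∈ A`, `b`'s witness `u ∈ B`. -/
lemma union_case (hpre : G.Preconnected)
    (hKA : ∀ a ∈ A, ∀ c, c ∉ A → G.Adj a c → ∀ b, b ∉ A → ∀ u ∈ A, G.Adj b u → G.Adj a b)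
    (hKB : ∀ a ∈ B, ∀ c, c ∉ B → G.Adj a c → ∀ b, b ∉ B → ∀ u ∈ B, G.Adj b u → G.Adj a b)
    {p q : V} (hpA : p ∈ A) (hpB : p ∈ B) (hqA : q ∈ A) (hqB : q ∉ B)
    {a c b u : V} (ha : a ∈ A) (hcA : c ∉ A) (hcB : c ∉ B) (hac : G.Adj a c)
    (hbA : b ∉ A) (hbB : b ∉ B) (hu : u ∈ B) (hbu : G.Adj b u) :
    G.Adj a b := by
  by_cases haB : a ∈ B
  · exact hKB a haB c hcB hac b hbB u hu hbu
  by_cases hx : ∃ t, (t ∈ A ∧ t ∈ B) ∧ ∃ z, z ∉ B ∧ G.Adj t z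
  · obtain ⟨t, ⟨htA, htB⟩, z, hzB, htz⟩ := hx
    have htb : G.Adj t b := hKB t htB z hzB htz b hbB u hu hbu
    exact hKA a ha c hcA hac b hbA t htA htb.symm
  · push_neg at hx
    obtain ⟨x, hxP, y, hyP, hxy⟩ :=
      cross_edge hpre (X := A ∩ B) (Set.mem_inter hpA hpB) (fun h => hqB h.2)
    have hyB : y ∈ B := by
      by_contra hyB
      exact hx x ⟨hxP.1, hxP.2⟩ y hyB hxy
    have hyA : y ∉ A := fun h => hyP ⟨h, hyB⟩
    have hxc : G.Adj x c := hKA x hxP.1 y hyA hxy c hcA a ha hac.symm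
    exact absurd hxc (hx x ⟨hxP.1, hxP.2⟩ c hcB)

/-- The asymmetric case in the intersection proof: `b ∉ B`. -/
lemma inter_case (hpre : G.Preconnected)
    (hKA : ∀ a ∈ A, ∀ c, c ∉ A → G.Adj a c → ∀ b, b ∉ A → ∀ u ∈ A, G.Adj b u → G.Adj a b)
    (hKB : ∀ a ∈ B, ∀ c, c ∉ B → G.Adj a c → ∀ b, b ∉ B → ∀ u ∈ B, G.Adj b u → G.Adj a b)
    {s : V} (hsA : s ∉ A) (hsB : s ∉ B)
    {a c b u : V} (haA : a ∈ A) (haB : a ∈ B)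
    (hcP : c ∉ A ∩ B) (hac : G.Adj a c)
    (hbB : b ∉ B) (huA : u ∈ A) (huB : u ∈ B) (hbu : G.Adj b u) :
    G.Adj a b := by
  by_cases hcB : c ∈ B
  · have hcA : c ∉ A := fun h => hcP ⟨h, hcB⟩
    obtain ⟨s', hs', w, hw, hsw⟩ :=
      cross_edge hpre (X := (A ∪ B)ᶜ)
        (show s ∈ (A ∪ B)ᶜ from fun h => h.elim hsA hsB)
        (show a ∉ (A ∪ B)ᶜ from fun h => h (Set.mem_union_left _ haA))
    have hwU : w ∈ A ∪ B := not_not.mp hw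
    have hs'A : s' ∉ A := fun h => hs' (Set.mem_union_left _ h)
    have hs'B : s' ∉ B := fun h => hs' (Set.mem_union_right _ h)
    have has' : G.Adj a s' := by
      rcases hwU with hwA | hwB
      · exact hKA a haA c hcA hac s' hs'A w hwA hsw
      · have hus' : G.Adj u s' := hKB u huB b hbB hbu.symm s' hs'B w hwB hsw
        exact hKA a haA c hcA hac s' hs'A u huA hus'.symm
    exact hKB a haB s' hs'B has' b hbB u huB hbu
  · exact hKB a haB c hcB hac b hbB u huB hbu

end Cases

/-- If `A` and `B` are overlapping split-modules of a connected finite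
simple graph `G = (V,E)`, then `A ∪ B` is also a split-module of `G`. Moreover, if
additionally `A ∪ B ≠ V`, then `A ∩ B` is also a split-module of `G`. -/
theorem splitModule_union_inter {V : Type*} [Fintype V] (G : SimpleGraph V)
    (hconn : G.Connected) (A B : Set V)
    (hA : IsSplitModule G A) (hB : IsSplitModule G B)
    (hover : (A ∩ B).Nonempty ∧ (A \ B).Nonempty ∧ (B \ A).Nonempty) :
    IsSplitModule G (A ∪ B) ∧
      (A ∪ B ≠ Set.univ → IsSplitModule G (A ∩ B)) := by
  obtain ⟨⟨p, hpA, hpB⟩, ⟨q, hqA, hqB⟩, ⟨r, hrB, hrA⟩⟩ := hover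
  have hApr : A ≠ Set.univ := fun h => hrA (h ▸ Set.mem_univ r)
  have hBpr : B ≠ Set.univ := fun h => hqB (h ▸ Set.mem_univ q)
  have hKA := key_of_module hconn hA ⟨p, hpA⟩ hApr
  have hKB := key_of_module hconn hB ⟨p, hpB⟩ hBpr
  have hpre := hconn.preconnected
  constructor
  · by_cases hU : A ∪ B = Set.univ
    · exact Or.inl hU
    · refine Or.inr (Or.inr ⟨G.connectedComponentMk p, ?_⟩)
      rw [supp_eq_univ hconn]
      apply splitIn_of_key
      intro a ha c hc hac b hb u hu hbu
      have hcA : c ∉ A := fun h => hc (Set.mem_union_left _ h)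
      have hcB : c ∉ B := fun h => hc (Set.mem_union_right _ h)
      have hbA : b ∉ A := fun h => hb (Set.mem_union_left _ h)
      have hbB : b ∉ B := fun h => hb (Set.mem_union_right _ h)
      rcases ha with haA | haB
      · rcases hu with huA | huB
        · exact hKA a haA c hcA hac b hbA u huA hbu
        · exact union_case hpre hKA hKB hpA hpB hqA hqB haA hcA hcB hac hbA hbB huB hbu
      · rcases hu with huA | huB
        · exact union_case hpre hKB hKA hpB hpA hrB hrA haB hcB hcA hac hbB hbA huA hbu
        · exact hKB a haB c hcB hac b hbB u huB hbu
  · intro hU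
    obtain ⟨s, hs⟩ := Set.ne_univ_iff_exists_notMem _ |>.mp hU
    have hsA : s ∉ A := fun h => hs (Set.mem_union_left _ h)
    have hsB : s ∉ B := fun h => hs (Set.mem_union_right _ h)
    refine Or.inr (Or.inr ⟨G.connectedComponentMk p, ?_⟩)
    rw [supp_eq_univ hconn]
    apply splitIn_of_key
    intro a ha c hc hac b hb u hu hbu
    by_cases hbB : b ∈ B
    · have hbA : b ∉ A := fun h => hb ⟨h, hbB⟩
      have hc' : c ∉ B ∩ A := fun h => hc ⟨h.2, h.1⟩
      exact inter_case hpre hKB hKA hsB hsA ha.2 ha.1 hc' hac hbA hu.2 hu.1 hbu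
    · exact inter_case hpre hKA hKB hsA hsB ha.1 ha.2 hc hac hbB hu.1 hu.2 hbu
end

section
/- Let G = (V,E) be a connected finite simple graph and let A and B be overlapping split-modules of G. Then A ∖ B is also a split-module of G. -/
open scoped Classical

/-- In a connected graph, every connected component has full support. -/
lemma supp_eq_univ_of_connected {V : Type*} {G : SimpleGraph V} (h : G.Connected)
    (c : G.ConnectedComponent) : c.supp = Set.univ := by
  obtain ⟨v, rfl⟩ := c.exists_rep
  ext w
  simp only [SimpleGraph.ConnectedComponent.mem_supp_iff, Set.mem_univ, iff_true]
  exact SimpleGraph.ConnectedComponent.sound (h.preconnected w v)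

/-- Cross edges of a split form a complete bipartite graph between the two boundaries. -/
lemma split_cross {V : Type*} (G : SimpleGraph V) (X : Set V)
    (h : IsSplitIn G Set.univ X)
    (a b : V) (ha : a ∈ X) (hb : b ∉ X) (hao : ∃ c, c ∉ X ∧ G.Adj a c)
    (hbi : ∃ c ∈ X, G.Adj b c) : G.Adj a b := by
  obtain ⟨c, hc, hac⟩ := hao
  obtain ⟨a₀, ha₀, hba₀⟩ := hbi
  have h1 : a ∈ extNbhdIn G Set.univ (Set.univ \ X) :=
    ⟨trivial, by simp [ha], c, by simp [hc], hac⟩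
  have h2 : a₀ ∈ extNbhdIn G Set.univ (Set.univ \ X) :=
    ⟨trivial, by simp [ha₀], b, by simp [hb], hba₀.symm⟩
  have h3 : b ∈ extNbhdIn G Set.univ X := ⟨trivial, hb, a₀, ha₀, hba₀⟩
  exact (h.2 a h1 a₀ h2 b h3).mpr hba₀.symm

/-- Let `G = (V,E)` be a connected finite simple graph and let `A` and
`B` be overlapping split-modules of `G`. Then `A ∖ B` is also a split-module of `G`. -/
theorem splitModule_diff {V : Type*} [Fintype V] (G : SimpleGraph V)
    (hconn : G.Connected) (A B : Set V)
    (hA : IsSplitModule G A) (hB : IsSplitModule G B)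
    (hover : (A ∩ B).Nonempty ∧ (A \ B).Nonempty ∧ (B \ A).Nonempty) :
    IsSplitModule G (A \ B) := by
  obtain ⟨⟨x, hxA, hxB⟩, ⟨d₀, hd₀A, hd₀B⟩, ⟨z, hzB, hzA⟩⟩ := hover
  have hAs : IsSplitIn G Set.univ A := by
    rcases hA with h | h | ⟨c, hc⟩
    · exact absurd (h ▸ Set.mem_univ z : z ∈ A) hzA
    · exact absurd (h ▸ hxA) (Set.notMem_empty x)
    · rwa [supp_eq_univ_of_connected hconn c] at hc
  have hBs : IsSplitIn G Set.univ B := by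
    rcases hB with h | h | ⟨c, hc⟩
    · exact absurd (h ▸ Set.mem_univ d₀ : d₀ ∈ B) hd₀B
    · exact absurd (h ▸ hxB) (Set.notMem_empty x)
    · rwa [supp_eq_univ_of_connected hconn c] at hc
  have crossA := split_cross G A hAs
  have crossB := split_cross G B hBs
  -- key: every boundary vertex of A \ B is adjacent to every external neighbor of A \ B
  have key : ∀ a ∈ A \ B, (∃ c, c ∉ A \ B ∧ G.Adj a c) →
      ∀ b, b ∉ A \ B → (∃ c ∈ A \ B, G.Adj b c) → G.Adj a b := by
    intro a ⟨haA, haB⟩ ⟨c, hcD, hac⟩ b hbD ⟨a₂, ⟨ha₂A, ha₂B⟩, hba₂⟩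
    by_cases hbig : ∃ w, w ∉ A ∧ w ∉ B
    · obtain ⟨w, hwA₀, hwB₀⟩ := hbig
      by_cases hbA : b ∈ A
      · -- b ∈ A ∩ B
        have hbB : b ∈ B := by
          by_contra h; exact hbD ⟨hbA, h⟩
        by_cases haN : ∃ c ∈ B, G.Adj a c
        · exact (crossB b a hbB haB ⟨a₂, ha₂B, hba₂⟩ haN).symm
        · exfalso
          push_neg at haN
          have hcB : c ∉ B := fun h => haN c h hac
          have hcA : c ∉ A := fun h => hcD ⟨h, hcB⟩
          -- a has no neighbor in B, but a ∈ ∂A (neighbor c outside A)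
          have hyNbr : ∀ y, y ∈ B → y ∉ A → (∃ p ∈ A, G.Adj y p) → False := by
            intro y hyB hyA ⟨p, hpA, hyp⟩
            have : G.Adj a y := crossA a y haA hyA ⟨c, hcA, hac⟩ ⟨p, hpA, hyp⟩
            exact haN y hyB this
          obtain ⟨d, -, hdy, hdw⟩ :=
            ((hconn.preconnected z a).some).exists_boundary_dart (B \ A)
              ⟨hzB, hzA⟩ (fun h => h.2 haA)
          by_cases hwA : d.snd ∈ A
          · exact hyNbr d.fst hdy.1 hdy.2 ⟨d.snd, hwA, d.adj⟩
          · have hwB : d.snd ∉ B := fun h => hdw ⟨h, hwA⟩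
            have : G.Adj d.fst a₂ :=
              crossB d.fst a₂ hdy.1 ha₂B ⟨d.snd, hwB, d.adj⟩ ⟨b, hbB, hba₂.symm⟩
            exact hyNbr d.fst hdy.1 hdy.2 ⟨a₂, ha₂A, this⟩
      · -- b ∉ A
        by_cases haO : ∃ q, q ∉ A ∧ G.Adj a q
        · exact crossA a b haA hbA haO ⟨a₂, ha₂A, hba₂⟩
        · exfalso
          push_neg at haO
          have hcA : c ∈ A := by
            by_contra h; exact haO c h hac
          have hcB : c ∈ B := by
            by_contra h; exact hcD ⟨hcA, h⟩
          -- every boundary vertex of B lies in A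
          have hP : ∀ p, p ∈ B → (∃ q, q ∉ B ∧ G.Adj p q) → p ∈ A := by
            intro p hpB hpo
            by_contra hpA
            have : G.Adj p a := crossB p a hpB haB hpo ⟨c, hcB, hac⟩
            exact haO p hpA this.symm
          obtain ⟨d, -, hdy, hdw⟩ :=
            ((hconn.preconnected z a).some).exists_boundary_dart (B \ A)
              ⟨hzB, hzA⟩ (fun h => h.2 haA)
          by_cases hwB : d.snd ∈ B
          · have hwA : d.snd ∈ A := by
              by_contra h; exact hdw ⟨hwB, h⟩
            have ha₂O : ∃ q, q ∉ A ∧ G.Adj a₂ q := ⟨b, hbA, hba₂.symm⟩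
            have : G.Adj a₂ d.fst :=
              crossA a₂ d.fst ha₂A hdy.2 ha₂O ⟨d.snd, hwA, d.adj⟩
            exact hdy.2 (hP d.fst hdy.1 ⟨a₂, ha₂B, this.symm⟩)
          · exact hdy.2 (hP d.fst hdy.1 ⟨d.snd, hwB, d.adj⟩)
    · -- A ∪ B = univ
      push_neg at hbig
      have hbB : b ∈ B := by
        by_cases h : b ∈ A
        · by_contra hb; exact hbD ⟨h, hb⟩
        · exact hbig b h
      have hcB : c ∈ B := by
        by_cases h : c ∈ A
        · by_contra hc'; exact hcD ⟨h, hc'⟩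
        · exact hbig c h
      exact (crossB b a hbB haB ⟨a₂, ha₂B, hba₂⟩ ⟨c, hcB, hac⟩).symm
  right; right
  refine ⟨G.connectedComponentMk x, ?_⟩
  rw [supp_eq_univ_of_connected hconn]
  refine ⟨Set.subset_univ _, ?_⟩
  rintro a₁ ⟨-, ha₁n, c₁, hc₁, hac₁⟩ a₂ ⟨-, ha₂n, c₂, hc₂, hac₂⟩ b ⟨-, hbn, cb, hcb, hbc⟩
  have ha₁D : a₁ ∈ A \ B := by
    by_contra h; exact ha₁n ⟨trivial, h⟩
  have ha₂D : a₂ ∈ A \ B := by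
    by_contra h; exact ha₂n ⟨trivial, h⟩
  have hc₁D : c₁ ∉ A \ B := hc₁.2
  have hc₂D : c₂ ∉ A \ B := hc₂.2
  have h1 : G.Adj a₁ b := key a₁ ha₁D ⟨c₁, hc₁D, hac₁⟩ b hbn ⟨cb, hcb, hbc⟩
  have h2 : G.Adj a₂ b := key a₂ ha₂D ⟨c₂, hc₂D, hac₂⟩ b hbn ⟨cb, hcb, hbc⟩
  exact iff_of_true h1 h2
end

section
/- Let k ∈ ℕ, let G = (V,E) be a finite simple graph, and let A, B be disjoint split-modules of G with A ∪ B = V. Let a, b ∈ V be such that a ∈ N(A) and b ∈ N(B). If max( rw(G[A ∪ {a}]), rw(G[B ∪ {b}]) ) ≤ k, then rw(G) ≤ k. -/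
open scoped Classical

/-- The cut-rank of `U`: the rank over GF(2) of the `U × (V ∖ U)` submatrix of the
adjacency matrix of `G` (padded with zeros, which does not change the rank). -/
noncomputable def cutRank {V : Type*} [Fintype V] (G : SimpleGraph V) (U : Set V) : ℕ :=
  Matrix.rank (Matrix.of fun u w : V =>
    if u ∈ U ∧ w ∉ U ∧ G.Adj u w then (1 : ZMod 2) else 0)

/-- A rank-decomposition of `G`: a finite tree `T` of maximum degree 3 together with a
bijection `toLeaf` from the vertices of `G` to the leaves (degree-1 vertices) of `T`. -/
structure RankDecomp {V : Type*} [Fintype V] (G : SimpleGraph V) where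
  L : Type
  fintypeL : Fintype L
  T : SimpleGraph L
  isTree : T.IsTree
  maxDeg : ∀ x : L, (T.neighborSet x).ncard ≤ 3
  toLeaf : V → L
  inj : Function.Injective toLeaf
  range_eq : Set.range toLeaf = {x : L | (T.neighborSet x).ncard = 1}

/-- The width of the rank-decomposition `D` is at most `k`: for every edge `xy` of `T`,
the cut-rank of the set of vertices of `G` whose leaves lie on the `x`-side of `T − xy`
is at most `k`. -/
def RankDecomp.WidthLE {V : Type*} [Fintype V] {G : SimpleGraph V}
    (D : RankDecomp G) (k : ℕ) : Prop :=
  ∀ x y : D.L, D.T.Adj x y →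
    cutRank G {v : V | (D.T.deleteEdges {s(x, y)}).Reachable (D.toLeaf v) x} ≤ k

/-- The rank-width of `G`: the least `k` admitting a rank-decomposition of width at
most `k` (graphs on at most one vertex, having no rank-decomposition, get rank-width 0). -/
noncomputable def rankWidth {V : Type*} [Fintype V] (G : SimpleGraph V) : ℕ :=
  sInf {k | ∃ D : RankDecomp G, D.WidthLE k}

/-- Transfer reachability along a "weak homomorphism". -/
lemma reach_map {α β : Type*} {X : SimpleGraph α} {Y : SimpleGraph β} (f : α → β)
    (hf : ∀ ⦃u v⦄, X.Adj u v → Y.Adj (f u) (f v) ∨ f u = f v) :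
    ∀ {u v : α}, X.Reachable u v → Y.Reachable (f u) (f v) := by
  intro u v h
  obtain ⟨p⟩ := h
  induction p with
  | nil => exact SimpleGraph.Reachable.refl _
  | cons hadj q ih =>
    rcases hf hadj with h' | h'
    · exact (h'.reachable).trans ih
    · rw [h']; exact ih

lemma walk_target_has_neighbor {α : Type*} {H : SimpleGraph α} :
    ∀ {u l : α}, H.Walk u l → u ≠ l → ∃ z, H.Adj z l
  | _, _, SimpleGraph.Walk.nil, hne => absurd rfl hne
  | u, l, SimpleGraph.Walk.cons (v := v) hadj q, hne => by
    by_cases hv : v = l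
    · exact ⟨u, hv ▸ hadj⟩
    · exact walk_target_has_neighbor q hv

lemma reach_target_has_neighbor {α : Type*} {H : SimpleGraph α} {u l : α}
    (h : H.Reachable u l) (hne : u ≠ l) : ∃ z, H.Adj z l := by
  obtain ⟨p⟩ := h
  exact walk_target_has_neighbor p hne

lemma cutRank_compl {V : Type*} [Fintype V] (G : SimpleGraph V) (U : Set V) :
    cutRank G Uᶜ = cutRank G U := by
  rw [cutRank, cutRank, ← Matrix.rank_transpose (Matrix.of fun u w : V =>
    if u ∈ U ∧ w ∉ U ∧ G.Adj u w then (1 : ZMod 2) else 0)]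
  congr 1
  ext u w
  simp only [Matrix.of_apply, Matrix.transpose_apply, Set.mem_compl_iff]
  by_cases h1 : u ∈ U <;> by_cases h2 : w ∈ U <;> by_cases h3 : G.Adj u w <;>
    simp [h1, h2, h3, G.adj_comm]

lemma one_le_cutRank {V : Type*} [Fintype V] (G : SimpleGraph V) {U : Set V} {u w : V}
    (hu : u ∈ U) (hw : w ∉ U) (h : G.Adj u w) : 1 ≤ cutRank G U := by
  set M : Matrix V V (ZMod 2) := Matrix.of fun u w : V =>
    if u ∈ U ∧ w ∉ U ∧ G.Adj u w then (1 : ZMod 2) else 0 with hMdef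
  rw [Nat.one_le_iff_ne_zero]
  intro h0
  have hbot : LinearMap.range M.mulVecLin = ⊥ := Submodule.finrank_eq_zero.mp h0
  have hmem : M.mulVecLin (Pi.single w 1) ∈ LinearMap.range M.mulVecLin :=
    LinearMap.mem_range_self _ _
  rw [hbot, Submodule.mem_bot] at hmem
  have : M.mulVecLin (Pi.single w 1) u = 1 := by
    simp only [Matrix.mulVecLin_apply, Matrix.mulVec, dotProduct, hMdef, Matrix.of_apply]
    rw [Finset.sum_eq_single w]
    · simp [hu, hw, h]
    · intro j _ hj; simp [Pi.single_apply, hj]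
    · intro hww; exact absurd (Finset.mem_univ w) hww
  rw [hmem] at this
  simp at this

lemma rank_vecMulVec_le {m n : Type*} [Fintype m] [Fintype n] (f : m → ZMod 2) (g : n → ZMod 2) :
    (Matrix.vecMulVec f g).rank ≤ 1 := by
  rw [Matrix.vecMulVec_eq Unit]
  calc (Matrix.replicateCol Unit f * Matrix.replicateRow Unit g).rank ≤ (Matrix.replicateRow Unit g).rank :=
        Matrix.rank_mul_le_right _ _
    _ ≤ Fintype.card Unit := Matrix.rank_le_card_height _
    _ = 1 := Fintype.card_unit

lemma key_cutRank {V : Type*} [Fintype V] (G : SimpleGraph V) (A : Set V) (a : V)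
    (haA : a ∉ A)
    (H1 : ∀ u, u ∉ A → (∃ x ∈ A, G.Adj u x) → ∀ w ∈ A, (G.Adj u w ↔ G.Adj a w))
    (X : Set ((insert a A : Set V)))
    (haX : (⟨a, Set.mem_insert a A⟩ : (insert a A : Set V)) ∈ X) :
    cutRank G (Aᶜ ∪ (Subtype.val '' X)) ≤ cutRank (G.induce (insert a A)) X := by
  set Y : Set V := Aᶜ ∪ (Subtype.val '' X) with hY
  set M : Matrix V V (ZMod 2) :=
    Matrix.of (fun u w : V => if u ∈ Y ∧ w ∉ Y ∧ G.Adj u w then (1 : ZMod 2) else 0) with hM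
  set M' : Matrix (insert a A : Set V) (insert a A : Set V) (ZMod 2) :=
    Matrix.of (fun s t : (insert a A : Set V) =>
      if s ∈ X ∧ t ∉ X ∧ (G.induce (insert a A)).Adj s t then (1 : ZMod 2) else 0) with hM'
  set ea : (insert a A : Set V) := ⟨a, Set.mem_insert a A⟩ with hea
  set P : Matrix V (insert a A : Set V) (ZMod 2) := Matrix.of (fun u s =>
    if h : u ∈ A then (if s = ⟨u, Set.mem_insert_of_mem a h⟩ then 1 else 0)
    else (if (∃ x ∈ A, G.Adj u x) ∧ s = ea then 1 else 0)) with hP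
  set Q : Matrix (insert a A : Set V) V (ZMod 2) := Matrix.of (fun s w =>
    if h : w ∈ A then (if s = ⟨w, Set.mem_insert_of_mem a h⟩ then 1 else 0) else 0) with hQ
  have hMeq : M = P * (M' * Q) := by
    ext u w
    have hinner : ∀ s : (insert a A : Set V), (M' * Q) s w =
        if h : w ∈ A then M' s ⟨w, Set.mem_insert_of_mem a h⟩ else 0 := by
      intro s
      rw [Matrix.mul_apply]
      by_cases hw : w ∈ A
      · rw [dif_pos hw]
        rw [Finset.sum_eq_single (⟨w, Set.mem_insert_of_mem a hw⟩ : (insert a A : Set V))]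
        · simp [hQ, hw]
        · intro t _ ht; simp [hQ, hw, ht]
        · intro hmem; exact absurd (Finset.mem_univ _) hmem
      · rw [dif_neg hw]
        apply Finset.sum_eq_zero
        intro t _
        simp [hQ, hw]
    rw [Matrix.mul_apply]
    by_cases hu : u ∈ A
    · rw [Finset.sum_eq_single (⟨u, Set.mem_insert_of_mem a hu⟩ : (insert a A : Set V))]
      · rw [hinner]
        by_cases hw : w ∈ A
        · rw [dif_pos hw]
          have huY : u ∈ Y ↔ (⟨u, Set.mem_insert_of_mem a hu⟩ : (insert a A : Set V)) ∈ X := by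
            simp only [hY, Set.mem_union, Set.mem_compl_iff, hu, not_true_eq_false,
              false_or, Set.mem_image]
            constructor
            · rintro ⟨s, hsX, hsv⟩
              have : s = ⟨u, Set.mem_insert_of_mem a hu⟩ := Subtype.ext hsv
              rwa [this] at hsX
            · intro h; exact ⟨_, h, rfl⟩
          have hwY : w ∈ Y ↔ (⟨w, Set.mem_insert_of_mem a hw⟩ : (insert a A : Set V)) ∈ X := by
            simp only [hY, Set.mem_union, Set.mem_compl_iff, hw, not_true_eq_false,
              false_or, Set.mem_image]
            constructor
            · rintro ⟨s, hsX, hsv⟩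
              have : s = ⟨w, Set.mem_insert_of_mem a hw⟩ := Subtype.ext hsv
              rwa [this] at hsX
            · intro h; exact ⟨_, h, rfl⟩
          simp only [hM, hM', Matrix.of_apply, hP, dif_pos hu, if_pos rfl, if_true, one_mul]
          apply if_congr _ rfl rfl
          rw [huY, hwY]
          simp [SimpleGraph.comap_adj]
        · have hwY : w ∈ Y := by simp [hY, Set.mem_union, Set.mem_compl_iff, hw]
          rw [dif_neg hw]
          simp [hM, hwY, hP, dif_pos hu]
      · intro t _ ht
        simp [hP, dif_pos hu, ht]
      · intro hmem; exact absurd (Finset.mem_univ _) hmem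
    · -- u ∉ A
      have huY : u ∈ Y := by simp [hY, hu]
      by_cases hun : ∃ x ∈ A, G.Adj u x
      · rw [Finset.sum_eq_single ea]
        · rw [hinner]
          by_cases hw : w ∈ A
          · rw [dif_pos hw]
            have hwY : w ∈ Y ↔ (⟨w, Set.mem_insert_of_mem a hw⟩ : (insert a A : Set V)) ∈ X := by
              simp only [hY, Set.mem_union, Set.mem_compl_iff, hw, not_true_eq_false,
                false_or, Set.mem_image]
              constructor
              · rintro ⟨s, hsX, hsv⟩
                have : s = ⟨w, Set.mem_insert_of_mem a hw⟩ := Subtype.ext hsv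
                rwa [this] at hsX
              · intro h; exact ⟨_, h, rfl⟩
            simp only [hM, hM', Matrix.of_apply, hP, dif_neg hu, and_true]
            rw [if_pos hun, one_mul]
            apply if_congr _ rfl rfl
            rw [hwY]
            simp only [SimpleGraph.comap_adj, Function.Embedding.coe_subtype, hea]
            constructor
            · rintro ⟨_, h2, h3⟩
              exact ⟨haX, h2, (H1 u hu hun w hw).mp h3⟩
            · rintro ⟨_, h2, h3⟩
              exact ⟨huY, h2, (H1 u hu hun w hw).mpr h3⟩
          · have hwY : w ∈ Y := by simp [hY, Set.mem_union, Set.mem_compl_iff, hw]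
            rw [dif_neg hw]
            simp [hM, hwY]
        · intro t _ ht
          simp [hP, dif_neg hu, ht]
        · intro hmem; exact absurd (Finset.mem_univ _) hmem
      · have hz : ∀ s : (insert a A : Set V), P u s = 0 := by
          intro s; simp [hP, dif_neg hu, hun]
        have : M u w = 0 := by
          by_cases hw : w ∈ A
          · have : ¬ G.Adj u w := fun hadj => hun ⟨w, hw, hadj⟩
            simp [hM, this]
          · have hwY : w ∈ Y := by simp [hY, Set.mem_union, Set.mem_compl_iff, hw]
            simp [hM, hwY]
        rw [this]
        symm
        apply Finset.sum_eq_zero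
        intro s _
        rw [hz s, zero_mul]
  have t1 : cutRank G Y = M.rank := by
    rw [cutRank, hM]
    exact congrArg Matrix.rank (by
      ext u w
      by_cases h : u ∈ Y ∧ w ∉ Y ∧ G.Adj u w <;> simp [h])
  calc cutRank G Y = M.rank := t1
    _ = (P * (M' * Q)).rank := by rw [hMeq]
    _ ≤ (M' * Q).rank := Matrix.rank_mul_le_right _ _
    _ ≤ M'.rank := Matrix.rank_mul_le_left _ _
    _ = cutRank (G.induce (insert a A)) X := by
      rw [cutRank, hM']
      congr 1

section Glue

variable {α β : Type*} (TA : SimpleGraph α) (TB : SimpleGraph β) (la : α) (lb : β)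

/-- Glue two graphs by adding an edge between `la` and `lb`. -/
def glue : SimpleGraph (α ⊕ β) where
  Adj x y := match x, y with
    | Sum.inl u, Sum.inl v => TA.Adj u v
    | Sum.inr u, Sum.inr v => TB.Adj u v
    | Sum.inl u, Sum.inr v => u = la ∧ v = lb
    | Sum.inr u, Sum.inl v => u = lb ∧ v = la
  symm := by
    constructor
    rintro (u | u) (v | v) h
    · exact h.symm
    · exact ⟨h.2, h.1⟩
    · exact ⟨h.2, h.1⟩
    · exact h.symm
  loopless := by
    constructor
    rintro (u | u) h
    exacts [TA.loopless.irrefl u h, TB.loopless.irrefl u h]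

@[simp] lemma glue_adj_ll {u v : α} : (glue TA TB la lb).Adj (Sum.inl u) (Sum.inl v) ↔ TA.Adj u v :=
  Iff.rfl
@[simp] lemma glue_adj_rr {u v : β} : (glue TA TB la lb).Adj (Sum.inr u) (Sum.inr v) ↔ TB.Adj u v :=
  Iff.rfl
@[simp] lemma glue_adj_lr {u : α} {v : β} :
    (glue TA TB la lb).Adj (Sum.inl u) (Sum.inr v) ↔ u = la ∧ v = lb := Iff.rfl
@[simp] lemma glue_adj_rl {u : β} {v : α} :
    (glue TA TB la lb).Adj (Sum.inr u) (Sum.inl v) ↔ u = lb ∧ v = la := Iff.rfl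

lemma glue_nbhd_inl (x : α) : (glue TA TB la lb).neighborSet (Sum.inl x) =
    Sum.inl '' TA.neighborSet x ∪ (if x = la then {Sum.inr lb} else ∅) := by
  ext z
  cases z with
  | inl v =>
    by_cases hx : x = la <;>
      simp [SimpleGraph.mem_neighborSet, hx, Sum.inl.injEq]
  | inr v =>
    by_cases hx : x = la <;>
      simp [SimpleGraph.mem_neighborSet, hx, eq_comm]

lemma glue_nbhd_inr (y : β) : (glue TA TB la lb).neighborSet (Sum.inr y) =
    Sum.inr '' TB.neighborSet y ∪ (if y = lb then {Sum.inl la} else ∅) := by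
  ext z
  cases z with
  | inl v =>
    by_cases hy : y = lb <;>
      simp [SimpleGraph.mem_neighborSet, hy, eq_comm]
  | inr v =>
    by_cases hy : y = lb <;>
      simp [SimpleGraph.mem_neighborSet, hy, Sum.inr.injEq]

lemma glue_ncard_inl [Finite α] [Finite β] (x : α) :
    ((glue TA TB la lb).neighborSet (Sum.inl x)).ncard =
      (TA.neighborSet x).ncard + (if x = la then 1 else 0) := by
  rw [glue_nbhd_inl]
  by_cases hx : x = la
  · rw [if_pos hx, if_pos hx, Set.ncard_union_eq (by simp) (Set.toFinite _) (Set.toFinite _),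
      Set.ncard_image_of_injective _ Sum.inl_injective, Set.ncard_singleton]
  · rw [if_neg hx, if_neg hx, Set.union_empty,
      Set.ncard_image_of_injective _ Sum.inl_injective, add_zero]

lemma glue_ncard_inr [Finite α] [Finite β] (y : β) :
    ((glue TA TB la lb).neighborSet (Sum.inr y)).ncard =
      (TB.neighborSet y).ncard + (if y = lb then 1 else 0) := by
  rw [glue_nbhd_inr]
  by_cases hy : y = lb
  · rw [if_pos hy, if_pos hy, Set.ncard_union_eq (by simp) (Set.toFinite _) (Set.toFinite _),
      Set.ncard_image_of_injective _ Sum.inr_injective, Set.ncard_singleton]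
  · rw [if_neg hy, if_neg hy, Set.union_empty,
      Set.ncard_image_of_injective _ Sum.inr_injective, add_zero]

/-- No crossing reachability after deleting the bridge. -/
lemma glue_bridge_sep {u : α} {v : β} :
    ¬ ((glue TA TB la lb).deleteEdges {s(Sum.inl la, Sum.inr lb)}).Reachable
      (Sum.inl u) (Sum.inr v) := by
  intro h
  have := reach_map (Y := (⊥ : SimpleGraph Bool)) (Sum.elim (fun _ => true) (fun _ => false))
    (by
      rintro (p | p) (q | q) h'
      all_goals rw [SimpleGraph.deleteEdges_adj] at h'
      all_goals obtain ⟨hadj, hne⟩ := h'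
      · exact Or.inr rfl
      · exact absurd (by rw [hadj.1, hadj.2]; exact rfl) hne
      · exact absurd (by rw [hadj.1, hadj.2, Sym2.eq_swap]; exact rfl) hne
      · exact Or.inr rfl) h
  simp [SimpleGraph.reachable_bot] at this

lemma glue_delL_proj {x₀ y₀ : α} {z z' : α ⊕ β}
    (h : ((glue TA TB la lb).deleteEdges {s(Sum.inl x₀, Sum.inl y₀)}).Reachable z z') :
    (TA.deleteEdges {s(x₀, y₀)}).Reachable (Sum.elim id (fun _ => la) z)
      (Sum.elim id (fun _ => la) z') := by
  refine reach_map (Sum.elim id (fun _ => la)) ?_ h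
  rintro (p | p) (q | q) h'
  all_goals rw [SimpleGraph.deleteEdges_adj] at h'
  all_goals obtain ⟨hadj, hne⟩ := h' 
  · refine Or.inl (SimpleGraph.deleteEdges_adj.mpr ⟨hadj, ?_⟩)
    simp only [Set.mem_singleton_iff, Sym2.eq_iff, Sum.inl.injEq] at hne ⊢
    exact hne
  · rcases hadj with ⟨h1, h2⟩; rw [h1]; exact Or.inr rfl
  · rcases hadj with ⟨h1, h2⟩; rw [h2]; exact Or.inr rfl
  · exact Or.inr rfl

lemma glue_delR_proj {x₀ y₀ : β} {z z' : α ⊕ β}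
    (h : ((glue TA TB la lb).deleteEdges {s(Sum.inr x₀, Sum.inr y₀)}).Reachable z z') :
    (TB.deleteEdges {s(x₀, y₀)}).Reachable (Sum.elim (fun _ => lb) id z)
      (Sum.elim (fun _ => lb) id z') := by
  refine reach_map (Sum.elim (fun _ => lb) id) ?_ h
  rintro (p | p) (q | q) h'
  all_goals rw [SimpleGraph.deleteEdges_adj] at h'
  all_goals obtain ⟨hadj, hne⟩ := h' 
  · exact Or.inr rfl
  · rcases hadj with ⟨h1, h2⟩; rw [h2]; exact Or.inr rfl
  · rcases hadj with ⟨h1, h2⟩; rw [h1]; exact Or.inr rfl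
  · refine Or.inl (SimpleGraph.deleteEdges_adj.mpr ⟨hadj, ?_⟩)
    simp only [Set.mem_singleton_iff, Sym2.eq_iff, Sum.inr.injEq] at hne ⊢
    exact hne

/-- Lift a reachability in `TA` minus an edge to the glued graph minus that edge. -/
lemma glue_delL_liftL {x₀ y₀ u v : α}
    (h : (TA.deleteEdges {s(x₀, y₀)}).Reachable u v) :
    ((glue TA TB la lb).deleteEdges {s(Sum.inl x₀, Sum.inl y₀)}).Reachable
      (Sum.inl u) (Sum.inl v) := by
  refine reach_map Sum.inl ?_ h
  intro p q h'
  rw [SimpleGraph.deleteEdges_adj] at h'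
  obtain ⟨hadj, hne⟩ := h'
  refine Or.inl (SimpleGraph.deleteEdges_adj.mpr ⟨hadj, ?_⟩)
  simp only [Set.mem_singleton_iff, Sym2.eq_iff, Sum.inl.injEq] at hne ⊢
  exact hne

/-- Lift a reachability in `TB` to the glued graph minus an `inl`-edge. -/
lemma glue_delL_liftR {x₀ y₀ : α} {u v : β}
    (h : TB.Reachable u v) :
    ((glue TA TB la lb).deleteEdges {s(Sum.inl x₀, Sum.inl y₀)}).Reachable
      (Sum.inr u) (Sum.inr v) := by
  refine reach_map Sum.inr ?_ h
  intro p q hadj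
  refine Or.inl (SimpleGraph.deleteEdges_adj.mpr ⟨hadj, ?_⟩)
  simp [Sym2.eq_iff]

lemma glue_delR_liftR {x₀ y₀ u v : β}
    (h : (TB.deleteEdges {s(x₀, y₀)}).Reachable u v) :
    ((glue TA TB la lb).deleteEdges {s(Sum.inr x₀, Sum.inr y₀)}).Reachable
      (Sum.inr u) (Sum.inr v) := by
  refine reach_map Sum.inr ?_ h
  intro p q h'
  rw [SimpleGraph.deleteEdges_adj] at h'
  obtain ⟨hadj, hne⟩ := h'
  refine Or.inl (SimpleGraph.deleteEdges_adj.mpr ⟨hadj, ?_⟩)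
  simp only [Set.mem_singleton_iff, Sym2.eq_iff, Sum.inr.injEq] at hne ⊢
  exact hne

lemma glue_delR_liftL {x₀ y₀ : β} {u v : α}
    (h : TA.Reachable u v) :
    ((glue TA TB la lb).deleteEdges {s(Sum.inr x₀, Sum.inr y₀)}).Reachable
      (Sum.inl u) (Sum.inl v) := by
  refine reach_map Sum.inl ?_ h
  intro p q hadj
  refine Or.inl (SimpleGraph.deleteEdges_adj.mpr ⟨hadj, ?_⟩)
  simp [Sym2.eq_iff]

lemma glue_del_bridge_liftL {u v : α}
    (h : TA.Reachable u v) :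
    ((glue TA TB la lb).deleteEdges {s(Sum.inl la, Sum.inr lb)}).Reachable
      (Sum.inl u) (Sum.inl v) := by
  refine reach_map Sum.inl ?_ h
  intro p q hadj
  refine Or.inl (SimpleGraph.deleteEdges_adj.mpr ⟨hadj, ?_⟩)
  simp [Sym2.eq_iff]

lemma glue_del_bridge_liftR {u v : β}
    (h : TB.Reachable u v) :
    ((glue TA TB la lb).deleteEdges {s(Sum.inl la, Sum.inr lb)}).Reachable
      (Sum.inr u) (Sum.inr v) := by
  refine reach_map Sum.inr ?_ h
  intro p q hadj
  refine Or.inl (SimpleGraph.deleteEdges_adj.mpr ⟨hadj, ?_⟩)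
  simp [Sym2.eq_iff]

/-- Characterization: after deleting an `inl`-edge, `inl u` reaches `inl v` iff it does in
`TA` minus the edge. -/
lemma glue_delL_iff_ll {x₀ y₀ u v : α} :
    ((glue TA TB la lb).deleteEdges {s(Sum.inl x₀, Sum.inl y₀)}).Reachable
      (Sum.inl u) (Sum.inl v) ↔ (TA.deleteEdges {s(x₀, y₀)}).Reachable u v := by
  constructor
  · intro h
    simpa using glue_delL_proj TA TB la lb h
  · exact glue_delL_liftL TA TB la lb

lemma glue_delL_iff_rl (hTB : TB.Preconnected) {x₀ y₀ : α} {w : β} {v : α} :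
    ((glue TA TB la lb).deleteEdges {s(Sum.inl x₀, Sum.inl y₀)}).Reachable
      (Sum.inr w) (Sum.inl v) ↔ (TA.deleteEdges {s(x₀, y₀)}).Reachable la v := by
  constructor
  · intro h
    simpa using glue_delL_proj TA TB la lb h
  · intro h
    have h1 : ((glue TA TB la lb).deleteEdges {s(Sum.inl x₀, Sum.inl y₀)}).Reachable
        (Sum.inr w) (Sum.inr lb) := glue_delL_liftR TA TB la lb (hTB w lb)
    have h2 : ((glue TA TB la lb).deleteEdges {s(Sum.inl x₀, Sum.inl y₀)}).Adj
        (Sum.inr lb) (Sum.inl la) := by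
      refine SimpleGraph.deleteEdges_adj.mpr ⟨⟨rfl, rfl⟩, ?_⟩
      simp [Sym2.eq_iff]
    exact (h1.trans h2.reachable).trans (glue_delL_liftL TA TB la lb h)

lemma glue_delR_iff_rr {x₀ y₀ u v : β} :
    ((glue TA TB la lb).deleteEdges {s(Sum.inr x₀, Sum.inr y₀)}).Reachable
      (Sum.inr u) (Sum.inr v) ↔ (TB.deleteEdges {s(x₀, y₀)}).Reachable u v := by
  constructor
  · intro h
    simpa using glue_delR_proj TA TB la lb h
  · exact glue_delR_liftR TA TB la lb

lemma glue_delR_iff_lr (hTA : TA.Preconnected) {x₀ y₀ : β} {w : α} {v : β} :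
    ((glue TA TB la lb).deleteEdges {s(Sum.inr x₀, Sum.inr y₀)}).Reachable
      (Sum.inl w) (Sum.inr v) ↔ (TB.deleteEdges {s(x₀, y₀)}).Reachable lb v := by
  constructor
  · intro h
    simpa using glue_delR_proj TA TB la lb h
  · intro h
    have h1 : ((glue TA TB la lb).deleteEdges {s(Sum.inr x₀, Sum.inr y₀)}).Reachable
        (Sum.inl w) (Sum.inl la) := glue_delR_liftL TA TB la lb (hTA w la)
    have h2 : ((glue TA TB la lb).deleteEdges {s(Sum.inr x₀, Sum.inr y₀)}).Adj
        (Sum.inl la) (Sum.inr lb) := by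
      refine SimpleGraph.deleteEdges_adj.mpr ⟨⟨rfl, rfl⟩, ?_⟩
      simp [Sym2.eq_iff]
    exact (h1.trans h2.reachable).trans (glue_delR_liftR TA TB la lb h)

lemma glue_isTree (hA : TA.IsTree) (hB : TB.IsTree) : (glue TA TB la lb).IsTree := by
  have hconnA := hA.isConnected
  have hconnB := hB.isConnected
  have hreachL : ∀ u v : α, (glue TA TB la lb).Reachable (Sum.inl u) (Sum.inl v) := by
    intro u v
    exact reach_map Sum.inl (fun p q h => Or.inl h) (hconnA.preconnected u v)
  have hreachR : ∀ u v : β, (glue TA TB la lb).Reachable (Sum.inr u) (Sum.inr v) := by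
    intro u v
    exact reach_map Sum.inr (fun p q h => Or.inl h) (hconnB.preconnected u v)
  have hbridge : (glue TA TB la lb).Adj (Sum.inl la) (Sum.inr lb) := ⟨rfl, rfl⟩
  constructor
  · rw [SimpleGraph.connected_iff]
    refine ⟨?_, ⟨Sum.inl la⟩⟩
    rintro (u | u) (v | v)
    · exact hreachL u v
    · exact ((hreachL u la).trans hbridge.reachable).trans (hreachR lb v)
    · exact ((hreachR u lb).trans hbridge.symm.reachable).trans (hreachL la v)
    · exact hreachR u v
  · rw [SimpleGraph.isAcyclic_iff_forall_adj_isBridge]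
    rintro (u | u) (v | v) hadj
    · rw [SimpleGraph.isBridge_iff]
      intro hreach
      have : (TA.deleteEdges {s(u, v)}).Reachable u v := by
        rw [← glue_delL_iff_ll TA TB la lb]
        exact hreach
      exact ((SimpleGraph.isAcyclic_iff_forall_adj_isBridge.mp hA.IsAcyclic hadj)) (by
        simpa [SimpleGraph.deleteEdges] using this)
    · rcases hadj with ⟨h1, h2⟩
      rw [h1, h2, SimpleGraph.isBridge_iff]
      intro hreach
      exact glue_bridge_sep TA TB la lb (by simpa [SimpleGraph.deleteEdges] using hreach)
    · rcases hadj with ⟨h1, h2⟩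
      rw [h1, h2, SimpleGraph.isBridge_iff]
      intro hreach
      have heq : s(Sum.inr lb, Sum.inl la) = s(Sum.inl la, (Sum.inr lb : α ⊕ β)) := Sym2.eq_swap
      rw [heq] at hreach
      exact glue_bridge_sep TA TB la lb (by simpa [SimpleGraph.deleteEdges] using hreach.symm)
    · rw [SimpleGraph.isBridge_iff]
      intro hreach
      have : (TB.deleteEdges {s(u, v)}).Reachable u v := by
        rw [← glue_delR_iff_rr TA TB la lb]
        exact hreach
      exact ((SimpleGraph.isAcyclic_iff_forall_adj_isBridge.mp hB.IsAcyclic hadj)) (by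
        simpa [SimpleGraph.deleteEdges] using this)

end Glue

lemma sym2_bool (p q v w : Bool) (hpq : p ≠ q) (hvw : v ≠ w) : s(p, q) = s(v, w) := by
  revert p q v w; decide

lemma K2_isTree : (⊤ : SimpleGraph Bool).IsTree := by
  constructor
  · exact SimpleGraph.connected_top
  · rw [SimpleGraph.isAcyclic_iff_forall_adj_isBridge]
    intro v w hadj
    rw [SimpleGraph.isBridge_iff]
    intro hreach
    have hvw : v ≠ w := hadj.ne
    have := reach_map (Y := (⊥ : SimpleGraph Bool)) id (by
      intro p q h'
      rw [SimpleGraph.deleteEdges_adj] at h'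
      obtain ⟨h1, h2⟩ := h'
      exfalso
      apply h2
      rw [Set.mem_singleton_iff]
      exact sym2_bool p q v w h1.ne hvw) hreach
    rw [SimpleGraph.reachable_bot] at this
    exact hvw this

lemma K2_ncard (x : Bool) : ((⊤ : SimpleGraph Bool).neighborSet x).ncard = 1 := by
  have : (⊤ : SimpleGraph Bool).neighborSet x = {!x} := by
    ext y
    simp only [SimpleGraph.mem_neighborSet, SimpleGraph.top_adj, Set.mem_singleton_iff]
    cases x <;> cases y <;> decide
  rw [this, Set.ncard_singleton]

lemma P4_ncard (y : Bool ⊕ Bool) :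
    ((glue (⊤ : SimpleGraph Bool) (⊤ : SimpleGraph Bool) false false).neighborSet y).ncard =
      if y = Sum.inl false then 2 else if y = Sum.inr false then 2 else 1 := by
  rcases y with t | t <;> cases t <;>
    simp [glue_ncard_inl, glue_ncard_inr, K2_ncard]

/-- `RankDecomp` does not depend on the graph, only on the vertex type. -/
def RankDecomp.transport {V : Type*} [Fintype V] {G G' : SimpleGraph V} (D : RankDecomp G) :
    RankDecomp G' :=
  ⟨D.L, D.fintypeL, D.T, D.isTree, D.maxDeg, D.toLeaf, D.inj, D.range_eq⟩

lemma rankDecomp_card_two {V : Type*} [Fintype V] (G : SimpleGraph V)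
    (h : Fintype.card V = 2) : Nonempty (RankDecomp G) := by
  have e : V ≃ Bool := Fintype.equivOfCardEq (by simp [h])
  refine ⟨⟨Bool, inferInstance, ⊤, K2_isTree, fun x => by rw [K2_ncard]; omega,
    e, e.injective, ?_⟩⟩
  have : Set.range e = Set.univ := e.surjective.range_eq
  rw [this]
  ext x
  simp [K2_ncard]

lemma rankDecomp_aux : ∀ (n : ℕ) {W : Type*} [Fintype W] (G : SimpleGraph W),
    Fintype.card W = n + 2 → Nonempty (RankDecomp G) := by
  intro n
  induction n with
  | zero => intro W _ G hW; exact rankDecomp_card_two G hW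
  | succ n ih =>
    intro W _ G hW
    haveI : Nonempty W := Fintype.card_pos_iff.mp (by omega)
    obtain ⟨v⟩ := ‹Nonempty W›
    have hcard' : Fintype.card {w : W | w ≠ v} = n + 2 := by
      have := Set.card_ne_eq v
      omega
    obtain ⟨D'⟩ := ih (⊥ : SimpleGraph {w : W | w ≠ v}) hcard'
    haveI : Fintype D'.L := D'.fintypeL
    haveI hne' : Nonempty {w : W | w ≠ v} := Fintype.card_pos_iff.mp (by omega)
    obtain ⟨w₀⟩ := hne'
    have hleaf : (D'.T.neighborSet (D'.toLeaf w₀)).ncard = 1 := by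
      have : D'.toLeaf w₀ ∈ Set.range D'.toLeaf := ⟨w₀, rfl⟩
      rwa [D'.range_eq] at this
    refine ⟨⟨D'.L ⊕ (Bool ⊕ Bool), inferInstance,
      glue D'.T (glue ⊤ ⊤ false false) (D'.toLeaf w₀) (Sum.inl false),
      glue_isTree _ _ _ _ D'.isTree (glue_isTree _ _ _ _ K2_isTree K2_isTree),
      ?_,
      (fun u => if h : u = v then Sum.inr (Sum.inr true)
        else if (⟨u, h⟩ : {w : W | w ≠ v}) = w₀ then Sum.inr (Sum.inl true)
        else Sum.inl (D'.toLeaf ⟨u, h⟩)),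
      ?_, ?_⟩⟩
    · rintro (x | y)
      · rw [glue_ncard_inl]
        by_cases hx : x = D'.toLeaf w₀
        · rw [hx, hleaf, if_pos rfl]; omega
        · rw [if_neg hx]; have := D'.maxDeg x; omega
      · rw [glue_ncard_inr, P4_ncard]
        rcases y with t | t <;> cases t <;> simp
    · intro u1 u2 heq
      dsimp only at heq
      by_cases h1 : u1 = v <;> by_cases h2 : u2 = v
      · rw [h1, h2]
      · rw [dif_pos h1, dif_neg h2] at heq
        by_cases h2' : (⟨u2, h2⟩ : {w : W | w ≠ v}) = w₀ <;> simp [h2'] at heq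
      · rw [dif_neg h1, dif_pos h2] at heq
        by_cases h1' : (⟨u1, h1⟩ : {w : W | w ≠ v}) = w₀ <;> simp [h1'] at heq
      · rw [dif_neg h1, dif_neg h2] at heq
        by_cases h1' : (⟨u1, h1⟩ : {w : W | w ≠ v}) = w₀ <;>
          by_cases h2' : (⟨u2, h2⟩ : {w : W | w ≠ v}) = w₀
        · rw [show u1 = ((⟨u1, h1⟩ : {w : W | w ≠ v}) : W) from rfl,
            show u2 = ((⟨u2, h2⟩ : {w : W | w ≠ v}) : W) from rfl, h1', h2']
        · rw [if_pos h1', if_neg h2'] at heq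
          exact absurd heq (by simp)
        · rw [if_neg h1', if_pos h2'] at heq
          exact absurd heq (by simp)
        · rw [if_neg h1', if_neg h2'] at heq
          have := D'.inj (Sum.inl_injective heq)
          rw [show u1 = ((⟨u1, h1⟩ : {w : W | w ≠ v}) : W) from rfl,
            show u2 = ((⟨u2, h2⟩ : {w : W | w ≠ v}) : W) from rfl, this]
    · ext z
      simp only [Set.mem_range, Set.mem_setOf_eq]
      constructor
      · rintro ⟨u, rfl⟩
        by_cases h1 : u = v
        · rw [dif_pos h1, glue_ncard_inr, P4_ncard]
          simp
        · by_cases h1' : (⟨u, h1⟩ : {w : W | w ≠ v}) = w₀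
          · rw [dif_neg h1, if_pos h1', glue_ncard_inr, P4_ncard]
            simp
          · rw [dif_neg h1, if_neg h1', glue_ncard_inl]
            have hmem : D'.toLeaf ⟨u, h1⟩ ∈ Set.range D'.toLeaf := ⟨_, rfl⟩
            rw [D'.range_eq] at hmem
            have hne : D'.toLeaf ⟨u, h1⟩ ≠ D'.toLeaf w₀ := fun hc => h1' (D'.inj hc)
            rw [if_neg hne, hmem]
      · intro hz
        rcases z with x | y
        · rw [glue_ncard_inl] at hz
          have hne : x ≠ D'.toLeaf w₀ := by
            intro hc
            rw [hc, hleaf, if_pos rfl] at hz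
            omega
          rw [if_neg hne, add_zero] at hz
          have : x ∈ Set.range D'.toLeaf := by rw [D'.range_eq]; exact hz
          obtain ⟨w', rfl⟩ := this
          have hw' : w' ≠ w₀ := fun hc => hne (by rw [hc])
          refine ⟨(w' : W), ?_⟩
          rw [dif_neg w'.2, if_neg (by simpa [Subtype.ext_iff] using hw')]
        · rw [glue_ncard_inr, P4_ncard] at hz
          rcases y with t | t <;> cases t
          · simp at hz
          · refine ⟨(w₀ : W), ?_⟩
            rw [dif_neg w₀.2, if_pos (by simp [Subtype.ext_iff])]
          · simp at hz
          · exact ⟨v, by rw [dif_pos rfl]⟩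

lemma nonempty_rankDecomp {V : Type*} [Fintype V] (G : SimpleGraph V)
    (h : Fintype.card V ≠ 1) : Nonempty (RankDecomp G) := by
  rcases Nat.lt_or_ge (Fintype.card V) 2 with h2 | h2
  · have h0 : Fintype.card V = 0 := by omega
    haveI : IsEmpty V := Fintype.card_eq_zero_iff.mp h0
    refine ⟨⟨PUnit, inferInstance, ⊥, ?_, ?_, isEmptyElim, fun x => isEmptyElim x, ?_⟩⟩
    · constructor
      · rw [SimpleGraph.connected_iff]
        exact ⟨by rintro ⟨⟩ ⟨⟩; exact SimpleGraph.Reachable.refl _, ⟨PUnit.unit⟩⟩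
      · exact SimpleGraph.isAcyclic_bot
    · intro x
      have hb : (⊥ : SimpleGraph PUnit).neighborSet x = ∅ := by ext y; simp
      rw [hb, Set.ncard_empty]
      omega
    · ext x
      constructor
      · rintro ⟨u, -⟩; exact isEmptyElim u
      · intro hx
        exfalso
        rw [Set.mem_setOf_eq] at hx
        have hb : (⊥ : SimpleGraph PUnit).neighborSet x = ∅ := by ext y; simp
        rw [hb, Set.ncard_empty] at hx
        omega
  · obtain ⟨n, hn⟩ : ∃ n, Fintype.card V = n + 2 := ⟨Fintype.card V - 2, by omega⟩
    exact rankDecomp_aux n G hn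

lemma cutRank_le_card {V : Type*} [Fintype V] (G : SimpleGraph V) (U : Set V) :
    cutRank G U ≤ Fintype.card V :=
  Matrix.rank_le_card_height _

/-- Let `k ∈ ℕ`, let `G = (V,E)` be a finite simple graph, and let
`A, B` be disjoint split-modules of `G` with `A ∪ B = V`. Let `a, b ∈ V` be such that
`a ∈ N(A)` and `b ∈ N(B)`. If `max(rw(G[A ∪ {a}]), rw(G[B ∪ {b}])) ≤ k`, then
`rw(G) ≤ k`. -/
theorem rankWidth_of_two_splitModules {V : Type*} [Fintype V] (k : ℕ)
    (G : SimpleGraph V) (A B : Set V)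
    (hA : IsSplitModule G A) (hB : IsSplitModule G B)
    (hAB : Disjoint A B) (hcover : A ∪ B = Set.univ)
    (a b : V) (ha : a ∈ extNbhd G A) (hb : b ∈ extNbhd G B)
    (hrw : max (rankWidth (G.induce (insert a A)))
        (rankWidth (G.induce (insert b B))) ≤ k) :
    rankWidth G ≤ k := by
  obtain ⟨haA, x, hxA, hax⟩ := ha
  obtain ⟨hbB, y, hyB, hby⟩ := hb
  -- B = Aᶜ
  have hBA : B = Aᶜ := by
    ext v
    constructor
    · intro hv
      exact Set.disjoint_right.mp hAB hv
    · intro hv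
      have : v ∈ A ∪ B := hcover ▸ Set.mem_univ v
      rcases this with h' | h'
      · exact absurd h' hv
      · exact h'
  have hmemB : ∀ {v : V}, v ∉ A → v ∈ B := fun {v} hv => by rw [hBA]; exact hv
  have hmemA : ∀ {v : V}, v ∉ B → v ∈ A := fun {v} hv => by
    rcases (hcover ▸ Set.mem_univ v : v ∈ A ∪ B) with h' | h'
    · exact h'
    · exact absurd h' hv
  have hnotB : ∀ {v : V}, v ∈ A → v ∉ B := fun {v} hv => by
    rw [hBA]; exact not_not.mpr hv
  have haB : a ∈ B := hmemB haA
  have hbA : b ∈ A := hmemA hbB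
  -- extract the splits
  rcases hA with hAu | hAe | ⟨c, hcA⟩
  · rw [hAu] at haA; exact absurd (Set.mem_univ a) haA
  · rw [hAe] at hxA; exact absurd hxA (Set.notMem_empty x)
  rcases hB with hBu | hBe | ⟨d, hdB⟩
  · rw [hBu] at hbB; exact absurd (Set.mem_univ b) hbB
  · rw [hBe] at hyB; exact absurd hyB (Set.notMem_empty y)
  -- the component is everything
  have hxc : G.connectedComponentMk x = c := hcA.1 hxA
  have hac : G.connectedComponentMk a = c := by
    rw [← hxc]
    exact SimpleGraph.ConnectedComponent.sound hax.reachable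
  have had : G.connectedComponentMk a = d := hdB.1 haB
  have hcd : c = d := by rw [← hac, had]
  have hsupp : c.supp = Set.univ := by
    ext v
    simp only [Set.mem_univ, iff_true]
    rcases (hcover ▸ Set.mem_univ v : v ∈ A ∪ B) with h' | h'
    · exact hcA.1 h'
    · rw [hcd]; exact hdB.1 h'
  have hIn : ∀ X : Set V, extNbhdIn G Set.univ X = extNbhd G X := by
    intro X
    ext v
    simp [extNbhdIn, extNbhd]
  have hdiffB : Set.univ \ B = A := by
    rw [hBA, Set.diff_eq, compl_compl, Set.univ_inter]
  have hdiffA : Set.univ \ A = B := by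
    rw [hBA, Set.diff_eq, Set.univ_inter]
  have hsplitA : ∀ u₁ ∈ extNbhd G B, ∀ u₂ ∈ extNbhd G B, ∀ w ∈ extNbhd G A,
      (G.Adj u₁ w ↔ G.Adj u₂ w) := by
    have h2 := hcA.2
    rw [hsupp, hdiffA, hIn, hIn] at h2
    exact h2
  have hsplitB : ∀ u₁ ∈ extNbhd G A, ∀ u₂ ∈ extNbhd G A, ∀ w ∈ extNbhd G B,
      (G.Adj u₁ w ↔ G.Adj u₂ w) := by
    have h2 := hdB.2
    rw [← hcd, hsupp, hdiffB, hIn, hIn] at h2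
    exact h2
  have haN : a ∈ extNbhd G A := ⟨haA, x, hxA, hax⟩
  have hbN : b ∈ extNbhd G B := ⟨hbB, y, hyB, hby⟩
  -- the homogeneity hypotheses for `key_cutRank`
  have H1A : ∀ u, u ∉ A → (∃ z ∈ A, G.Adj u z) → ∀ w ∈ A, (G.Adj u w ↔ G.Adj a w) := by
    intro u hu hex w hw
    have huN : u ∈ extNbhd G A := ⟨hu, hex⟩
    constructor
    · intro hadj
      have hwN : w ∈ extNbhd G B := ⟨hnotB hw, u, hmemB hu, hadj.symm⟩
      exact (hsplitB u huN a haN w hwN).mp hadj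
    · intro hadj
      have hwN : w ∈ extNbhd G B := ⟨hnotB hw, a, haB, hadj.symm⟩
      exact (hsplitB u huN a haN w hwN).mpr hadj
  have H1B : ∀ u, u ∉ B → (∃ z ∈ B, G.Adj u z) → ∀ w ∈ B, (G.Adj u w ↔ G.Adj b w) := by
    intro u hu hex w hw
    have huN : u ∈ extNbhd G B := ⟨hu, hex⟩
    constructor
    · intro hadj
      have hwN : w ∈ extNbhd G A := ⟨fun hc => (hnotB hc) hw, u, hmemA hu, hadj.symm⟩
      exact (hsplitA u huN b hbN w hwN).mp hadj
    · intro hadj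
      have hwN : w ∈ extNbhd G A := ⟨fun hc => (hnotB hc) hw, b, hbA, hadj.symm⟩
      exact (hsplitA u huN b hbN w hwN).mpr hadj
  -- complete bipartite structure between the sides
  have hbip : ∀ u w, u ∈ A → w ∈ B → (G.Adj u w ↔ (u ∈ extNbhd G B ∧ w ∈ extNbhd G A)) := by
    intro u w hu hw
    constructor
    · intro hadj
      exact ⟨⟨hnotB hu, w, hw, hadj⟩, ⟨fun hc => (hnotB hc) hw, u, hu, hadj.symm⟩⟩
    · rintro ⟨huN, hwN⟩
      obtain ⟨hwnA, t, htA, hwt⟩ := hwN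
      have htN : t ∈ extNbhd G B := ⟨hnotB htA, w, hw, hwt.symm⟩
      exact (hsplitA u huN t htN w ⟨hwnA, t, htA, hwt⟩).mpr hwt.symm
  -- cut-rank of A itself is at most 1
  have hAmat : (Matrix.of fun u w : V => if u ∈ A ∧ w ∉ A ∧ G.Adj u w then (1 : ZMod 2) else 0)
      = Matrix.vecMulVec (fun u => if u ∈ extNbhd G B then (1 : ZMod 2) else 0)
        (fun w => if w ∈ extNbhd G A then (1 : ZMod 2) else 0) := by
    ext u w
    rw [Matrix.of_apply, Matrix.vecMulVec_apply]
    by_cases hu' : u ∈ extNbhd G B <;> by_cases hw' : w ∈ extNbhd G A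
    · rw [if_pos hu', if_pos hw', one_mul, if_pos]
      refine ⟨hmemA hu'.1, hw'.1, ?_⟩
      exact (hbip u w (hmemA hu'.1) (hmemB hw'.1)).mpr ⟨hu', hw'⟩
    · rw [if_pos hu', if_neg hw', mul_zero, if_neg]
      rintro ⟨h1, h2, h3⟩
      exact hw' ((hbip u w h1 (hmemB h2)).mp h3).2
    · rw [if_neg hu', if_pos hw', zero_mul, if_neg]
      rintro ⟨h1, h2, h3⟩
      exact hu' ((hbip u w h1 (hmemB h2)).mp h3).1
    · rw [if_neg hu', if_neg hw', zero_mul, if_neg]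
      rintro ⟨h1, h2, h3⟩
      exact hu' ((hbip u w h1 (hmemB h2)).mp h3).1
  have hcutA : cutRank G A ≤ 1 := by
    rw [cutRank, hAmat]
    exact rank_vecMulVec_le _ _
  have hcutB : cutRank G B ≤ 1 := by
    rw [hBA, cutRank_compl]
    exact hcutA
  -- obtain the two rank-decompositions
  have hcardA : Fintype.card (insert a A : Set V) ≠ 1 := by
    have : (1 : ℕ) < Fintype.card (insert a A : Set V) := by
      rw [Fintype.one_lt_card_iff_nontrivial]
      exact ⟨⟨a, Set.mem_insert a A⟩, ⟨x, Set.mem_insert_of_mem a hxA⟩,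
        fun hc => haA (by rw [show a = x from congrArg Subtype.val hc]; exact hxA)⟩
    omega
  have hcardB : Fintype.card (insert b B : Set V) ≠ 1 := by
    have : (1 : ℕ) < Fintype.card (insert b B : Set V) := by
      rw [Fintype.one_lt_card_iff_nontrivial]
      exact ⟨⟨b, Set.mem_insert b B⟩, ⟨y, Set.mem_insert_of_mem b hyB⟩,
        fun hc => hbB (by rw [show b = y from congrArg Subtype.val hc]; exact hyB)⟩
    omega
  obtain ⟨D0A⟩ := nonempty_rankDecomp (G.induce (insert a A)) hcardA
  obtain ⟨D0B⟩ := nonempty_rankDecomp (G.induce (insert b B)) hcardB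
  have hne_setA : {k' | ∃ D : RankDecomp (G.induce (insert a A)), D.WidthLE k'}.Nonempty :=
    ⟨Fintype.card (insert a A : Set V), D0A, fun _ _ _ => cutRank_le_card _ _⟩
  have hne_setB : {k' | ∃ D : RankDecomp (G.induce (insert b B)), D.WidthLE k'}.Nonempty :=
    ⟨Fintype.card (insert b B : Set V), D0B, fun _ _ _ => cutRank_le_card _ _⟩
  obtain ⟨DA, hDA⟩ := Nat.sInf_mem hne_setA
  obtain ⟨DB, hDB⟩ := Nat.sInf_mem hne_setB
  have hDAk : DA.WidthLE k := fun x' y' h' =>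
    le_trans (hDA x' y' h') (le_trans (le_max_left _ _) hrw)
  have hDBk : DB.WidthLE k := fun x' y' h' =>
    le_trans (hDB x' y' h') (le_trans (le_max_right _ _) hrw)
  haveI : Fintype DA.L := DA.fintypeL
  haveI : Fintype DB.L := DB.fintypeL
  set la : DA.L := DA.toLeaf ⟨a, Set.mem_insert a A⟩ with hla
  set lb : DB.L := DB.toLeaf ⟨b, Set.mem_insert b B⟩ with hlb
  have hlaleaf : (DA.T.neighborSet la).ncard = 1 := by
    have : la ∈ Set.range DA.toLeaf := ⟨_, rfl⟩
    rwa [DA.range_eq] at this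
  have hlbleaf : (DB.T.neighborSet lb).ncard = 1 := by
    have : lb ∈ Set.range DB.toLeaf := ⟨_, rfl⟩
    rwa [DB.range_eq] at this
  -- k ≥ 1
  have hk1 : 1 ≤ k := by
    obtain ⟨y₀, hy₀⟩ := Set.ncard_eq_one.mp hlaleaf
    have hadj0 : DA.T.Adj la y₀ := by
      have : y₀ ∈ DA.T.neighborSet la := by rw [hy₀]; exact rfl
      exact this
    refine le_trans ?_ (hDAk la y₀ hadj0)
    have haU : (⟨a, Set.mem_insert a A⟩ : (insert a A : Set V)) ∈
        {s : (insert a A : Set V) |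
          (DA.T.deleteEdges {s(la, y₀)}).Reachable (DA.toLeaf s) la} :=
      SimpleGraph.Reachable.refl _
    have hxU : (⟨x, Set.mem_insert_of_mem a hxA⟩ : (insert a A : Set V)) ∉
        {s : (insert a A : Set V) |
          (DA.T.deleteEdges {s(la, y₀)}).Reachable (DA.toLeaf s) la} := by
      intro hr
      have hne : DA.toLeaf ⟨x, Set.mem_insert_of_mem a hxA⟩ ≠ la := by
        intro hc
        have := DA.inj hc
        have : a = x := (congrArg Subtype.val this).symm
        rw [this] at haA
        exact haA hxA
      obtain ⟨z, hz⟩ := reach_target_has_neighbor hr hne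
      rw [SimpleGraph.deleteEdges_adj] at hz
      obtain ⟨hzadj, hzne⟩ := hz
      have : z ∈ DA.T.neighborSet la := hzadj.symm
      rw [hy₀, Set.mem_singleton_iff] at this
      apply hzne
      rw [this, Sym2.eq_swap]
      rfl
    exact one_le_cutRank (G.induce (insert a A)) haU hxU (by
      simp only [SimpleGraph.comap_adj, Function.Embedding.coe_subtype]
      exact hax)
  -- build the glued decomposition
  apply Nat.sInf_le
  refine ⟨⟨DA.L ⊕ DB.L, inferInstance, glue DA.T DB.T la lb,
    glue_isTree _ _ _ _ DA.isTree DB.isTree, ?_,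
    (fun v => if h : v ∈ A then Sum.inl (DA.toLeaf ⟨v, Set.mem_insert_of_mem a h⟩)
      else Sum.inr (DB.toLeaf ⟨v, Set.mem_insert_of_mem b (hmemB h)⟩)), ?_, ?_⟩, ?_⟩
  · -- max degree
    rintro (z | z)
    · rw [glue_ncard_inl]
      by_cases hz : z = la
      · rw [hz, hlaleaf, if_pos rfl]; omega
      · rw [if_neg hz]; have := DA.maxDeg z; omega
    · rw [glue_ncard_inr]
      by_cases hz : z = lb
      · rw [hz, hlbleaf, if_pos rfl]; omega
      · rw [if_neg hz]; have := DB.maxDeg z; omega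
  · -- injectivity
    intro u v heq
    dsimp only at heq
    by_cases hu : u ∈ A <;> by_cases hv : v ∈ A
    · rw [dif_pos hu, dif_pos hv] at heq
      have := DA.inj (Sum.inl_injective heq)
      exact congrArg Subtype.val this
    · rw [dif_pos hu, dif_neg hv] at heq; exact absurd heq (by simp)
    · rw [dif_neg hu, dif_pos hv] at heq; exact absurd heq (by simp)
    · rw [dif_neg hu, dif_neg hv] at heq
      have := DB.inj (Sum.inr_injective heq)
      exact congrArg Subtype.val this
  · -- range_eq
    ext z
    constructor
    · rintro ⟨v, hv⟩
      dsimp only at hv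
      rw [Set.mem_setOf_eq]
      by_cases hvA : v ∈ A
      · rw [dif_pos hvA] at hv
        rw [← hv, glue_ncard_inl]
        have hne : DA.toLeaf ⟨v, Set.mem_insert_of_mem a hvA⟩ ≠ la := by
          intro hc
          have := DA.inj hc
          have : v = a := congrArg Subtype.val this
          rw [this] at hvA
          exact haA hvA
        rw [if_neg hne, add_zero]
        have : DA.toLeaf ⟨v, Set.mem_insert_of_mem a hvA⟩ ∈ Set.range DA.toLeaf := ⟨_, rfl⟩
        rwa [DA.range_eq] at this
      · rw [dif_neg hvA] at hv
        rw [← hv, glue_ncard_inr]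
        have hne : DB.toLeaf ⟨v, Set.mem_insert_of_mem b (hmemB hvA)⟩ ≠ lb := by
          intro hc
          have := DB.inj hc
          have : v = b := congrArg Subtype.val this
          rw [this] at hvA
          exact hvA hbA
        rw [if_neg hne, add_zero]
        have : DB.toLeaf ⟨v, Set.mem_insert_of_mem b (hmemB hvA)⟩ ∈ Set.range DB.toLeaf :=
          ⟨_, rfl⟩
        rwa [DB.range_eq] at this
    · intro hmem
      rw [Set.mem_setOf_eq] at hmem
      rcases z with z | z
      · rw [glue_ncard_inl] at hmem
        have hne : z ≠ la := by
          intro hc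
          rw [hc, hlaleaf, if_pos rfl] at hmem
          omega
        rw [if_neg hne, add_zero] at hmem
        have : z ∈ Set.range DA.toLeaf := by rw [DA.range_eq]; exact hmem
        obtain ⟨s, hs⟩ := this
        have hsval : (s : V) ∈ A := by
          rcases s.2 with h' | h'
          · exfalso; apply hne; rw [← hs]; exact congrArg DA.toLeaf (Subtype.ext h')
          · exact h'
        refine ⟨(s : V), ?_⟩
        dsimp only
        rw [dif_pos hsval]
        rw [show (⟨(s : V), Set.mem_insert_of_mem a hsval⟩ : (insert a A : Set V)) = s from
          Subtype.ext rfl, hs]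
      · rw [glue_ncard_inr] at hmem
        have hne : z ≠ lb := by
          intro hc
          rw [hc, hlbleaf, if_pos rfl] at hmem
          omega
        rw [if_neg hne, add_zero] at hmem
        have : z ∈ Set.range DB.toLeaf := by rw [DB.range_eq]; exact hmem
        obtain ⟨s, hs⟩ := this
        have hsval : (s : V) ∈ B := by
          rcases s.2 with h' | h'
          · exfalso; apply hne; rw [← hs]; exact congrArg DB.toLeaf (Subtype.ext h')
          · exact h'
        have hsvalA : (s : V) ∉ A := fun hc => hnotB hc hsval
        refine ⟨(s : V), ?_⟩
        dsimp only
        rw [dif_neg hsvalA]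
        rw [show (⟨(s : V), Set.mem_insert_of_mem b (hmemB hsvalA)⟩ : (insert b B : Set V)) = s
          from Subtype.ext rfl, hs]
  · -- width
    rintro (z | z) (z' | z') hadj
    · -- inl / inl
      have hadj' : DA.T.Adj z z' := hadj
      have hXk := hDAk z z' hadj'
      set X : Set (insert a A : Set V) :=
        {s | (DA.T.deleteEdges {s(z, z')}).Reachable (DA.toLeaf s) z} with hX
      have hch : ∀ v : V,
          ((glue DA.T DB.T la lb).deleteEdges {s(Sum.inl z, Sum.inl z')}).Reachable
            (if h : v ∈ A then
                Sum.inl (DA.toLeaf ⟨v, Set.mem_insert_of_mem a h⟩)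
              else Sum.inr (DB.toLeaf ⟨v, Set.mem_insert_of_mem b (hmemB h)⟩))
            (Sum.inl z)
          ↔ (if h : v ∈ A then (⟨v, Set.mem_insert_of_mem a h⟩ ∈ X)
              else ((⟨a, Set.mem_insert a A⟩ : (insert a A : Set V)) ∈ X)) := by
        intro v
        by_cases hvA : v ∈ A
        · rw [dif_pos hvA, dif_pos hvA]
          exact glue_delL_iff_ll DA.T DB.T la lb
        · rw [dif_neg hvA, dif_neg hvA]
          exact glue_delL_iff_rl DA.T DB.T la lb DB.isTree.isConnected.preconnected
      by_cases haX : (⟨a, Set.mem_insert a A⟩ : (insert a A : Set V)) ∈ X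
      · have hYeq : {v : V |
            ((glue DA.T DB.T la lb).deleteEdges {s(Sum.inl z, Sum.inl z')}).Reachable
              (if h : v ∈ A then
                  Sum.inl (DA.toLeaf ⟨v, Set.mem_insert_of_mem a h⟩)
                else Sum.inr (DB.toLeaf ⟨v, Set.mem_insert_of_mem b (hmemB h)⟩))
              (Sum.inl z)} = Aᶜ ∪ (Subtype.val '' X) := by
          ext v
          rw [Set.mem_setOf_eq, hch v]
          by_cases hvA : v ∈ A
          · rw [dif_pos hvA]
            simp only [Set.mem_union, Set.mem_compl_iff, hvA, not_true_eq_false, false_or,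
              Set.mem_image]
            constructor
            · intro h'; exact ⟨_, h', rfl⟩
            · rintro ⟨s, hsX, hsv⟩
              rwa [show s = ⟨v, Set.mem_insert_of_mem a hvA⟩ from Subtype.ext hsv] at hsX
          · rw [dif_neg hvA]
            simp only [Set.mem_union, Set.mem_compl_iff, hvA, not_false_eq_true, true_or,
              iff_true]
            exact haX
        rw [hYeq]
        exact le_trans (key_cutRank G A a haA H1A X haX) hXk
      · have hYeq : {v : V |
            ((glue DA.T DB.T la lb).deleteEdges {s(Sum.inl z, Sum.inl z')}).Reachable
              (if h : v ∈ A then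
                  Sum.inl (DA.toLeaf ⟨v, Set.mem_insert_of_mem a h⟩)
                else Sum.inr (DB.toLeaf ⟨v, Set.mem_insert_of_mem b (hmemB h)⟩))
              (Sum.inl z)} = Subtype.val '' X := by
          ext v
          rw [Set.mem_setOf_eq, hch v]
          by_cases hvA : v ∈ A
          · rw [dif_pos hvA]
            simp only [Set.mem_image]
            constructor
            · intro h'; exact ⟨_, h', rfl⟩
            · rintro ⟨s, hsX, hsv⟩
              rwa [show s = ⟨v, Set.mem_insert_of_mem a hvA⟩ from Subtype.ext hsv] at hsX
          · rw [dif_neg hvA]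
            simp only [haX, false_iff, Set.mem_image, not_exists]
            rintro s ⟨hsX, hsv⟩
            rcases s.2 with h' | h'
            · apply haX
              rwa [show (⟨a, Set.mem_insert a A⟩ : (insert a A : Set V)) = s from
                Subtype.ext (by rw [h'])] 
            · rw [hsv] at h'; exact hvA h'
        rw [hYeq]
        have hstep1 : cutRank G (Subtype.val '' X) = cutRank G (Subtype.val '' X)ᶜ :=
          (cutRank_compl G (Subtype.val '' X)).symm
        have hcompl : (Subtype.val '' X)ᶜ = Aᶜ ∪ (Subtype.val '' Xᶜ) := by
          ext v
          simp only [Set.mem_compl_iff, Set.mem_union, Set.mem_image]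
          by_cases hvA : v ∈ A
          · simp only [hvA, not_true_eq_false, false_or]
            constructor
            · intro h'
              exact ⟨⟨v, Set.mem_insert_of_mem a hvA⟩, fun hc => h' ⟨_, hc, rfl⟩, rfl⟩
            · rintro ⟨s, hsX, hsv⟩ ⟨t, htX, htv⟩
              exact hsX (by rwa [show s = t from Subtype.ext (by rw [hsv, htv])])
          · simp only [hvA, not_false_eq_true, true_or, iff_true]
            intro ⟨s, hsX, hsv⟩
            rcases s.2 with h' | h'
            · apply haX
              rwa [show (⟨a, Set.mem_insert a A⟩ : (insert a A : Set V)) = s from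
                Subtype.ext (by rw [h'])]
            · rw [hsv] at h'; exact hvA h'
        rw [hstep1, hcompl]
        refine le_trans (key_cutRank G A a haA H1A Xᶜ haX) ?_
        rw [cutRank_compl]
        exact hXk
    · -- inl / inr : the bridge
      obtain ⟨h1, h2⟩ := hadj
      have hYeq : {v : V |
          ((glue DA.T DB.T la lb).deleteEdges {s(Sum.inl z, Sum.inr z')}).Reachable
            (if h : v ∈ A then
                Sum.inl (DA.toLeaf ⟨v, Set.mem_insert_of_mem a h⟩)
              else Sum.inr (DB.toLeaf ⟨v, Set.mem_insert_of_mem b (hmemB h)⟩))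
            (Sum.inl z)} = A := by
        rw [h1, h2]
        ext v
        rw [Set.mem_setOf_eq]
        by_cases hvA : v ∈ A
        · simp only [hvA, iff_true, dif_pos hvA]
          exact glue_del_bridge_liftL DA.T DB.T la lb
            (DA.isTree.isConnected.preconnected _ _)
        · simp only [hvA, iff_false, dif_neg hvA]
          intro hr
          exact glue_bridge_sep DA.T DB.T la lb hr.symm
      rw [hYeq]
      exact le_trans hcutA hk1
    · -- inr / inl : the bridge, reversed
      obtain ⟨h1, h2⟩ := hadj
      have hYeq : {v : V |
          ((glue DA.T DB.T la lb).deleteEdges {s(Sum.inr z, Sum.inl z')}).Reachable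
            (if h : v ∈ A then
                Sum.inl (DA.toLeaf ⟨v, Set.mem_insert_of_mem a h⟩)
              else Sum.inr (DB.toLeaf ⟨v, Set.mem_insert_of_mem b (hmemB h)⟩))
            (Sum.inr z)} = B := by
        rw [h1, h2]
        have hswap : ({s(Sum.inr lb, Sum.inl la)} : Set (Sym2 (DA.L ⊕ DB.L)))
            = {s(Sum.inl la, Sum.inr lb)} := by rw [Sym2.eq_swap]
        rw [hswap]
        ext v
        rw [Set.mem_setOf_eq]
        by_cases hvA : v ∈ A
        · simp only [hBA, Set.mem_compl_iff, hvA, not_true_eq_false, iff_false, dif_pos hvA]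
          intro hr
          exact glue_bridge_sep DA.T DB.T la lb hr
        · simp only [hBA, Set.mem_compl_iff, hvA, not_false_eq_true, iff_true, dif_neg hvA]
          exact glue_del_bridge_liftR DA.T DB.T la lb
            (DB.isTree.isConnected.preconnected _ _)
      rw [hYeq]
      exact le_trans hcutB hk1
    · -- inr / inr
      have hadj' : DB.T.Adj z z' := hadj
      have hXk := hDBk z z' hadj'
      set X : Set (insert b B : Set V) :=
        {s | (DB.T.deleteEdges {s(z, z')}).Reachable (DB.toLeaf s) z} with hX
      have hch : ∀ v : V,
          ((glue DA.T DB.T la lb).deleteEdges {s(Sum.inr z, Sum.inr z')}).Reachable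
            (if h : v ∈ A then
                Sum.inl (DA.toLeaf ⟨v, Set.mem_insert_of_mem a h⟩)
              else Sum.inr (DB.toLeaf ⟨v, Set.mem_insert_of_mem b (hmemB h)⟩))
            (Sum.inr z)
          ↔ (if h : v ∈ A then ((⟨b, Set.mem_insert b B⟩ : (insert b B : Set V)) ∈ X)
              else (⟨v, Set.mem_insert_of_mem b (hmemB h)⟩ ∈ X)) := by
        intro v
        by_cases hvA : v ∈ A
        · rw [dif_pos hvA, dif_pos hvA]
          exact glue_delR_iff_lr DA.T DB.T la lb DA.isTree.isConnected.preconnected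
        · rw [dif_neg hvA, dif_neg hvA]
          exact glue_delR_iff_rr DA.T DB.T la lb
      by_cases hbX : (⟨b, Set.mem_insert b B⟩ : (insert b B : Set V)) ∈ X
      · have hYeq : {v : V |
            ((glue DA.T DB.T la lb).deleteEdges {s(Sum.inr z, Sum.inr z')}).Reachable
              (if h : v ∈ A then
                  Sum.inl (DA.toLeaf ⟨v, Set.mem_insert_of_mem a h⟩)
                else Sum.inr (DB.toLeaf ⟨v, Set.mem_insert_of_mem b (hmemB h)⟩))
              (Sum.inr z)} = Bᶜ ∪ (Subtype.val '' X) := by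
          ext v
          rw [Set.mem_setOf_eq, hch v]
          by_cases hvA : v ∈ A
          · rw [dif_pos hvA]
            simp only [Set.mem_union, Set.mem_compl_iff, hnotB hvA, not_false_eq_true,
              true_or, iff_true]
            exact hbX
          · rw [dif_neg hvA]
            have hvB : v ∈ B := hmemB hvA
            simp only [Set.mem_union, Set.mem_compl_iff, hvB, not_true_eq_false, false_or,
              Set.mem_image]
            constructor
            · intro h'; exact ⟨_, h', rfl⟩
            · rintro ⟨s, hsX, hsv⟩
              rwa [show s = ⟨v, Set.mem_insert_of_mem b (hmemB hvA)⟩ from Subtype.ext hsv]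
                at hsX
        rw [hYeq]
        exact le_trans (key_cutRank G B b hbB H1B X hbX) hXk
      · have hYeq : {v : V |
            ((glue DA.T DB.T la lb).deleteEdges {s(Sum.inr z, Sum.inr z')}).Reachable
              (if h : v ∈ A then
                  Sum.inl (DA.toLeaf ⟨v, Set.mem_insert_of_mem a h⟩)
                else Sum.inr (DB.toLeaf ⟨v, Set.mem_insert_of_mem b (hmemB h)⟩))
              (Sum.inr z)} = Subtype.val '' X := by
          ext v
          rw [Set.mem_setOf_eq, hch v]
          by_cases hvA : v ∈ A
          · rw [dif_pos hvA]
            simp only [hbX, false_iff, Set.mem_image, not_exists]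
            rintro s ⟨hsX, hsv⟩
            rcases s.2 with h' | h'
            · apply hbX
              rwa [show (⟨b, Set.mem_insert b B⟩ : (insert b B : Set V)) = s from
                Subtype.ext (by rw [h'])]
            · rw [hsv] at h'; exact (hnotB hvA) h'
          · rw [dif_neg hvA]
            simp only [Set.mem_image]
            constructor
            · intro h'; exact ⟨_, h', rfl⟩
            · rintro ⟨s, hsX, hsv⟩
              rwa [show s = ⟨v, Set.mem_insert_of_mem b (hmemB hvA)⟩ from Subtype.ext hsv]
                at hsX
        rw [hYeq]
        have hstep1 : cutRank G (Subtype.val '' X) = cutRank G (Subtype.val '' X)ᶜ :=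
          (cutRank_compl G (Subtype.val '' X)).symm
        have hcompl : (Subtype.val '' X)ᶜ = Bᶜ ∪ (Subtype.val '' Xᶜ) := by
          ext v
          simp only [Set.mem_compl_iff, Set.mem_union, Set.mem_image]
          by_cases hvB : v ∈ B
          · simp only [hvB, not_true_eq_false, false_or]
            constructor
            · intro h'
              exact ⟨⟨v, Set.mem_insert_of_mem b hvB⟩, fun hc => h' ⟨_, hc, rfl⟩, rfl⟩
            · rintro ⟨s, hsX, hsv⟩ ⟨t, htX, htv⟩
              exact hsX (by rwa [show s = t from Subtype.ext (by rw [hsv, htv])])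
          · simp only [hvB, not_false_eq_true, true_or, iff_true]
            intro ⟨s, hsX, hsv⟩
            rcases s.2 with h' | h'
            · apply hbX
              rwa [show (⟨b, Set.mem_insert b B⟩ : (insert b B : Set V)) = s from
                Subtype.ext (by rw [h'])]
            · rw [hsv] at h'; exact hvB h'
        rw [hstep1, hcompl]
        refine le_trans (key_cutRank G B b hbB H1B Xᶜ hbX) ?_
        rw [cutRank_compl]
        exact hXk
end

section
/- Let k ∈ ℕ and let G be a disconnected finite simple graph with rank-width at least k + 2. Then for all vertices v, w ∈ V(G): v ∼ₖ^G w if and only if v and w lie in the same connected component G' of G and v ∼ₖ^{G'} w (where ∼ₖ^{G'} is the relation ∼ₖ computed in the component G'). -/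
open scoped Classical

/-- The relation `∼ₖ`: `v ∼ₖ w` iff there is a split-module `M` of `G` with `v, w ∈ M`
and `rw(G[M]) ≤ k`. -/
def simRel {V : Type*} [Fintype V] (k : ℕ) (G : SimpleGraph V) (v w : V) : Prop :=
  ∃ M : Set V, IsSplitModule G M ∧ v ∈ M ∧ w ∈ M ∧ rankWidth (G.induce M) ≤ k

section Aux

open SimpleGraph

variable {V V' : Type*}

lemma cutRank_image [Fintype V] [Fintype V'] (G : SimpleGraph V) (G' : SimpleGraph V')
    (e : V ≃ V') (hadj : ∀ a b, G.Adj a b ↔ G'.Adj (e a) (e b)) (U : Set V) :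
    cutRank G' (e '' U) = cutRank G U := by
  unfold cutRank
  have hm : (Matrix.of fun u w : V' =>
      if u ∈ e '' U ∧ w ∉ e '' U ∧ G'.Adj u w then (1 : ZMod 2) else 0)
      = (Matrix.of fun u w : V =>
      if u ∈ U ∧ w ∉ U ∧ G.Adj u w then (1 : ZMod 2) else 0).submatrix e.symm e.symm := by
    ext u w
    simp only [Matrix.submatrix_apply, Matrix.of_apply]
    refine if_congr ?_ rfl rfl
    have h1 : u ∈ e '' U ↔ e.symm u ∈ U := Set.mem_image_equiv
    have h2 : w ∈ e '' U ↔ e.symm w ∈ U := Set.mem_image_equiv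
    have h3 : G'.Adj u w ↔ G.Adj (e.symm u) (e.symm w) := by
      rw [hadj (e.symm u) (e.symm w), e.apply_symm_apply, e.apply_symm_apply]
    rw [h1, h2, h3]
  rw [hm, Matrix.rank_submatrix]

lemma widthLE_transfer [Fintype V] [Fintype V'] {G : SimpleGraph V} {G' : SimpleGraph V'}
    (e : V ≃ V') (hadj : ∀ a b, G.Adj a b ↔ G'.Adj (e a) (e b)) {n : ℕ}
    (h : ∃ D : RankDecomp G, D.WidthLE n) : ∃ D' : RankDecomp G', D'.WidthLE n := by
  obtain ⟨D, hD⟩ := h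
  refine ⟨⟨D.L, D.fintypeL, D.T, D.isTree, D.maxDeg, D.toLeaf ∘ e.symm,
    D.inj.comp e.symm.injective, ?_⟩, ?_⟩
  · rw [Set.range_comp, Equiv.range_eq_univ, Set.image_univ, D.range_eq]
  · intro x y hxy
    have hset : {v' : V' | (D.T.deleteEdges {s(x, y)}).Reachable ((D.toLeaf ∘ e.symm) v') x}
        = e '' {v : V | (D.T.deleteEdges {s(x, y)}).Reachable (D.toLeaf v) x} := by
      ext v'
      rw [Set.mem_image_equiv]
      rfl
    rw [hset, cutRank_image G G' e hadj]
    exact hD x y hxy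

lemma rankWidth_eq_of_equiv {iV : Fintype V} {iV' : Fintype V'}
    {G : SimpleGraph V} {G' : SimpleGraph V'}
    (e : V ≃ V') (hadj : ∀ a b, G.Adj a b ↔ G'.Adj (e a) (e b)) :
    rankWidth G' = rankWidth G := by
  letI := iV; letI := iV'
  have hadj' : ∀ a b, G'.Adj a b ↔ G.Adj (e.symm a) (e.symm b) := by
    intro a b
    rw [hadj (e.symm a) (e.symm b), e.apply_symm_apply, e.apply_symm_apply]
  unfold rankWidth
  congr 1
  ext n
  exact ⟨widthLE_transfer e.symm hadj', widthLE_transfer e hadj⟩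

lemma reach_induce_supp (G : SimpleGraph V) (c : G.ConnectedComponent) (u w : c.supp) :
    (G.induce c.supp).Reachable u w := by
  classical
  have hu : G.connectedComponentMk ↑u = c := u.2
  have hw : G.connectedComponentMk ↑w = c := w.2
  have hr : G.Reachable ↑u ↑w := ConnectedComponent.exact (hu.trans hw.symm)
  obtain ⟨p⟩ := hr
  have hsub : {x | x ∈ p.support} ⊆ c.supp := by
    intro x hx
    have hrx : G.Reachable ↑u x := ⟨p.takeUntil x hx⟩
    have : G.connectedComponentMk x = G.connectedComponentMk ↑u :=
      (ConnectedComponent.sound hrx).symm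
    rw [ConnectedComponent.mem_supp_iff, this, hu]
  have hcon := SimpleGraph.Walk.connected_induce_support p
  have hreach := hcon.preconnected ⟨↑u, p.start_mem_support⟩ ⟨↑w, p.end_mem_support⟩
  have := hreach.map (G.induceHomOfLE hsub).toHom
  exact this

lemma supp_univ_of_induce_supp (G : SimpleGraph V) (c : G.ConnectedComponent)
    (d : (G.induce c.supp).ConnectedComponent) : d.supp = Set.univ := by
  obtain ⟨x, rfl⟩ := d.exists_rep
  ext y
  simp only [ConnectedComponent.mem_supp_iff, Set.mem_univ, iff_true]
  exact ConnectedComponent.sound (reach_induce_supp G c y x)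

lemma splitIn_iff (G : SimpleGraph V) (C M : Set V) (hM : M ⊆ C) :
    IsSplitIn G C M ↔ IsSplitIn (G.induce C) Set.univ {x : C | ↑x ∈ M} := by
  have h1 : ∀ a : C, a ∈ extNbhdIn (G.induce C) Set.univ (Set.univ \ {x : C | ↑x ∈ M}) ↔
      (a : V) ∈ extNbhdIn G C (C \ M) := by
    intro a
    simp only [extNbhdIn, Set.mem_setOf_eq, Set.mem_diff, Set.mem_univ, true_and,
      not_and, not_not, comap_adj, Function.Embedding.coe_subtype]
    constructor
    · rintro ⟨ham, x, hxm, hadj⟩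
      exact ⟨a.2, fun _ => ham, ↑x, ⟨x.2, hxm⟩, hadj⟩
    · rintro ⟨haC, ham, x, ⟨hxC, hxm⟩, hadj⟩
      exact ⟨ham haC, ⟨x, hxC⟩, hxm, hadj⟩
  have h2 : ∀ b : C, b ∈ extNbhdIn (G.induce C) Set.univ {x : C | ↑x ∈ M} ↔
      (b : V) ∈ extNbhdIn G C M := by
    intro b
    simp only [extNbhdIn, Set.mem_setOf_eq, Set.mem_univ, true_and,
      comap_adj, Function.Embedding.coe_subtype]
    constructor
    · rintro ⟨hbm, x, hxm, hadj⟩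
      exact ⟨b.2, hbm, ↑x, hxm, hadj⟩
    · rintro ⟨-, hbm, x, hxm, hadj⟩
      exact ⟨hbm, ⟨x, hM hxm⟩, hxm, hadj⟩
  constructor
  · rintro ⟨-, hsp⟩
    refine ⟨Set.subset_univ _, ?_⟩
    intro a₁ ha₁ a₂ ha₂ b hb
    exact hsp ↑a₁ ((h1 a₁).mp ha₁) ↑a₂ ((h1 a₂).mp ha₂) ↑b ((h2 b).mp hb)
  · rintro ⟨-, hsp⟩
    refine ⟨hM, ?_⟩
    intro a₁ ha₁ a₂ ha₂ b hb
    exact hsp ⟨a₁, ha₁.1⟩ ((h1 ⟨a₁, ha₁.1⟩).mpr ha₁) ⟨a₂, ha₂.1⟩ ((h1 ⟨a₂, ha₂.1⟩).mpr ha₂)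
      ⟨b, hb.1⟩ ((h2 ⟨b, hb.1⟩).mpr hb)

lemma rankWidth_induce_univ {W : Type*} [Fintype W] (H : SimpleGraph W) :
    rankWidth (H.induce Set.univ) = rankWidth H :=
  rankWidth_eq_of_equiv (Equiv.Set.univ W).symm (fun _ _ => Iff.rfl)

lemma rankWidth_induce_induce [Fintype V] (G : SimpleGraph V) (C M : Set V) (hMC : M ⊆ C) :
    rankWidth ((G.induce C).induce {x : C | ↑x ∈ M}) = rankWidth (G.induce M) :=
  rankWidth_eq_of_equiv
    (⟨fun x => ⟨⟨x.1, hMC x.2⟩, x.2⟩, fun y => ⟨y.1.1, y.2⟩, fun _ => rfl, fun _ => rfl⟩ :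
      M ≃ {x : C | ↑x ∈ M}) (fun _ _ => Iff.rfl)

end Aux

/-- Let `k ∈ ℕ` and let `G` be a disconnected finite simple graph with
rank-width at least `k + 2`. Then for all vertices `v, w`: `v ∼ₖ^G w` iff `v` and `w`
lie in the same connected component `G'` of `G` and `v ∼ₖ^{G'} w`, where `∼ₖ^{G'}` is
computed in the component `G'` (the subgraph of `G` induced on the support of the
connected component of `v`). -/
theorem simRel_disconnected {V : Type*} [Fintype V] (k : ℕ) (G : SimpleGraph V)
    (hdis : ¬ G.Connected) (hGrw : k + 2 ≤ rankWidth G) (v w : V) :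
    simRel k G v w ↔
      ∃ h : w ∈ (G.connectedComponentMk v).supp,
        simRel k (G.induce (G.connectedComponentMk v).supp)
          ⟨v, ((G.connectedComponentMk v).mem_supp_iff v).mpr rfl⟩ ⟨w, h⟩ := by
  classical
  constructor
  · rintro ⟨M, hMsm, hvM, hwM, hrw⟩
    rcases hMsm with rfl | rfl | ⟨c', hsp⟩
    · have hle : rankWidth G ≤ k := by
        refine le_trans (le_of_eq ?_) hrw
        exact rankWidth_eq_of_equiv (Equiv.Set.univ V) (fun _ _ => Iff.rfl)
      omega
    · exact absurd hvM (Set.notMem_empty v)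
    · have hMC : M ⊆ c'.supp := hsp.1
      have hcv : G.connectedComponentMk v = c' :=
        (SimpleGraph.ConnectedComponent.mem_supp_iff _ _).mp (hMC hvM)
      subst hcv
      set C := (G.connectedComponentMk v).supp with hC
      refine ⟨hMC hwM, {x : C | ↑x ∈ M}, ?_, ?_, ?_, ?_⟩
      · right; right
        refine ⟨(G.induce C).connectedComponentMk
          ⟨v, ((G.connectedComponentMk v).mem_supp_iff v).mpr rfl⟩, ?_⟩
        rw [supp_univ_of_induce_supp]
        exact (splitIn_iff G C M hMC).mp hsp
      · exact hvM
      · exact hwM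
      · refine le_trans (le_of_eq ?_) hrw
        exact rankWidth_eq_of_equiv
          (⟨fun x => ⟨⟨x.1, hMC x.2⟩, x.2⟩, fun y => ⟨y.1.1, y.2⟩, fun _ => rfl, fun _ => rfl⟩ :
            M ≃ {x : C | ↑x ∈ M}) (fun _ _ => Iff.rfl)
  · rintro ⟨hw, M', hM'sm, hvM', hwM', hrw⟩
    rcases hM'sm with rfl | rfl | ⟨d, hsp⟩
    · refine ⟨(G.connectedComponentMk v).supp,
        Or.inr (Or.inr ⟨G.connectedComponentMk v, subset_rfl, ?_⟩),
        ((G.connectedComponentMk v).mem_supp_iff v).mpr rfl, hw, ?_⟩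
      · rintro a₁ ⟨-, -, x, hx, -⟩
        exact (hx.2 hx.1).elim
      · refine le_trans (le_of_eq ?_) hrw
        exact rankWidth_eq_of_equiv (Equiv.Set.univ _) (fun _ _ => Iff.rfl)
    · exact absurd hvM' (Set.notMem_empty _)
    · have hds := supp_univ_of_induce_supp G _ d
      rw [hds] at hsp
      have hMC : Subtype.val '' M' ⊆ (G.connectedComponentMk v).supp := by
        rintro x ⟨y, -, rfl⟩; exact y.2
      have hpre : {x : (G.connectedComponentMk v).supp | ↑x ∈ Subtype.val '' M'} = M' := by
        ext x
        simp only [Set.mem_setOf_eq]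
        exact ⟨fun ⟨y, hy, hxy⟩ => (Subtype.val_injective hxy) ▸ hy,
          fun hx => ⟨x, hx, rfl⟩⟩
      rw [← hpre] at hsp hrw hvM' hwM'
      refine ⟨Subtype.val '' M', Or.inr (Or.inr ⟨G.connectedComponentMk v, ?_⟩),
        hvM', hwM', ?_⟩
      · exact (splitIn_iff G _ _ hMC).mpr hsp
      · refine le_trans (le_of_eq ?_) hrw
        exact rankWidth_eq_of_equiv
          (⟨fun y => ⟨y.1.1, y.2⟩, fun x => ⟨⟨x.1, hMC x.2⟩, x.2⟩, fun _ => rfl, fun _ => rfl⟩ :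
            {x : (G.connectedComponentMk v).supp | ↑x ∈ Subtype.val '' M'} ≃
              ↥(Subtype.val '' M')) (fun _ _ => Iff.rfl)
end

section
/- Let G be a finite simple graph on n vertices that is C₄-free and has maximum degree at most 3, let j ∈ ℕ, and let G' be the graph obtained from G by adding n + 2 pairwise vertex-disjoint new 4-cycles, a new vertex q adjacent to every vertex of every added 4-cycle, and a new vertex q' adjacent to q and to one fixed vertex of G. Then G has a dominating set of cardinality at most j if and only if there exists a set S ⊆ V(G') with |S| ≤ j + 1 such that S is a dominating set of G' or S intersects the vertex set of every induced 4-cycle of G'. -/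
open scoped Classical

/-- `S` is a dominating set of `G`: every vertex is in `S` or has a neighbor in `S`. -/
def IsDomSet {V : Type*} (G : SimpleGraph V) (S : Set V) : Prop :=
  ∀ v : V, v ∈ S ∨ ∃ w ∈ S, G.Adj v w

/-- The vertex set of the gadget graph: the vertices of `G`, together with `n + 2` new
4-cycles (`Fin (n+2) × Fin 4`), a new vertex `q = Sum.inr (Sum.inr (Sum.inl ()))` and a
new vertex `q' = Sum.inr (Sum.inr (Sum.inr ()))`. -/
abbrev GadgetVertex (V : Type*) (n : ℕ) : Type _ :=
  V ⊕ ((Fin (n + 2) × Fin 4) ⊕ (Unit ⊕ Unit))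

/-- The gadget graph `G'` obtained from `G` by adding `n + 2` pairwise vertex-disjoint
new 4-cycles, a new vertex `q` adjacent to every vertex of every added 4-cycle, and a
new vertex `q'` adjacent to `q` and to the fixed vertex `v₀` of `G`. -/
def gadget {V : Type*} (G : SimpleGraph V) (n : ℕ) (v₀ : V) :
    SimpleGraph (GadgetVertex V n) :=
  SimpleGraph.fromRel (fun x y =>
    match x, y with
    | Sum.inl v, Sum.inl w => G.Adj v w
    | Sum.inr (Sum.inl (i, a)), Sum.inr (Sum.inl (i', a')) =>
        i = i' ∧ (SimpleGraph.cycleGraph 4).Adj a a'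
    | Sum.inr (Sum.inr (Sum.inl _)), Sum.inr (Sum.inl _) => True
    | Sum.inr (Sum.inr (Sum.inl _)), Sum.inr (Sum.inr (Sum.inr _)) => True
    | Sum.inr (Sum.inr (Sum.inr _)), Sum.inl v => v = v₀
    | _, _ => False)

/-- The vertex `q`. -/
def gq (V : Type) (n : ℕ) : GadgetVertex V n := Sum.inr (Sum.inr (Sum.inl ()))
/-- The vertex `q'`. -/
def gq' (V : Type) (n : ℕ) : GadgetVertex V n := Sum.inr (Sum.inr (Sum.inr ()))
/-- The vertex set of the `i`-th added 4-cycle. -/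
def cycSet (V : Type) (n : ℕ) (i : Fin (n + 2)) : Set (GadgetVertex V n) :=
  Set.range (fun a : Fin 4 => Sum.inr (Sum.inl (i, a)))

section Aux
variable {V : Type} {G : SimpleGraph V} {n : ℕ} {v₀ : V}

lemma gadget_adj_inl {v w : V} :
    (gadget G n v₀).Adj (Sum.inl v) (Sum.inl w) ↔ G.Adj v w := by
  rw [gadget, SimpleGraph.fromRel_adj]
  constructor
  · rintro ⟨-, h | h⟩
    · exact h
    · exact h.symm
  · intro h
    exact ⟨by simpa using h.ne, Or.inl h⟩

lemma gadget_adj_cyc {i i' : Fin (n + 2)} {a a' : Fin 4} :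
    (gadget G n v₀).Adj (Sum.inr (Sum.inl (i, a))) (Sum.inr (Sum.inl (i', a'))) ↔
      i = i' ∧ (SimpleGraph.cycleGraph 4).Adj a a' := by
  rw [gadget, SimpleGraph.fromRel_adj]
  constructor
  · rintro ⟨-, ⟨h1, h2⟩ | ⟨h1, h2⟩⟩
    · exact ⟨h1, h2⟩
    · exact ⟨h1.symm, h2.symm⟩
  · rintro ⟨rfl, h⟩
    exact ⟨by simpa using h.ne, Or.inl ⟨rfl, h⟩⟩

lemma gadget_adj_cyc_q {i : Fin (n + 2)} {a : Fin 4} :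
    (gadget G n v₀).Adj (Sum.inr (Sum.inl (i, a))) (gq V n) := by
  rw [gadget, SimpleGraph.fromRel_adj]
  exact ⟨by simp [gq], Or.inr trivial⟩

lemma gadget_adj_q'_q : (gadget G n v₀).Adj (gq' V n) (gq V n) := by
  rw [gadget, SimpleGraph.fromRel_adj]
  exact ⟨by simp [gq, gq'], Or.inr trivial⟩

lemma gadget_adj_q'_v₀ : (gadget G n v₀).Adj (gq' V n) (Sum.inl v₀) := by
  rw [gadget, SimpleGraph.fromRel_adj]
  exact ⟨by simp [gq'], Or.inl rfl⟩

/-- Each added 4-cycle induces a `C₄` in the gadget graph. -/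
lemma cyc_iso (i : Fin (n + 2)) :
    Nonempty ((gadget G n v₀).induce (cycSet V n i) ≃g SimpleGraph.cycleGraph 4) := by
  have hf : Function.Injective
      (fun a : Fin 4 => (Sum.inr (Sum.inl (i, a)) : GadgetVertex V n)) := by
    intro a b h; simpa using h
  refine ⟨(SimpleGraph.Iso.symm ⟨Equiv.ofInjective _ hf, ?_⟩ :)⟩
  intro a b
  show (gadget G n v₀).Adj (Sum.inr (Sum.inl (i, a))) (Sum.inr (Sum.inl (i, b))) ↔ _
  rw [gadget_adj_cyc]
  simp

/-- If `S` meets all added 4-cycles then `|S| ≥ n + 2`. -/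
lemma hit_card [Fintype V] {S : Set (GadgetVertex V n)}
    (h : ∀ i : Fin (n + 2), (S ∩ cycSet V n i).Nonempty) : n + 2 ≤ S.ncard := by
  choose g hg using h
  have hginj : Function.Injective g := by
    intro i i' he
    obtain ⟨a, ha⟩ := (hg i).2
    obtain ⟨b, hb⟩ := (hg i').2
    rw [he, ← hb] at ha
    simpa using congrArg (fun x => (Sum.elim (fun _ => i) (Sum.elim Prod.fst (fun _ => i)) x)) ha.symm |>.symm
  have hsub : Set.range g ⊆ S := by
    rintro x ⟨i, rfl⟩; exact (hg i).1
  calc n + 2 = (Set.range g).ncard := by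
        rw [← Set.image_univ, Set.ncard_image_of_injective _ hginj, Set.ncard_univ]
        simp
    _ ≤ S.ncard := Set.ncard_le_ncard hsub

end Aux

/-- Let `G` be a finite simple graph on `n` vertices that is `C₄`-free
and has maximum degree at most 3, let `j ∈ ℕ`, and let `G'` be the gadget graph obtained
from `G` (with fixed vertex `v₀`). Then `G` has a dominating set of cardinality at most
`j` iff there is a set `S ⊆ V(G')` with `|S| ≤ j + 1` such that `S` is a dominating set
of `G'` or `S` intersects the vertex set of every induced 4-cycle of `G'`. -/
theorem gadget_domination {V : Type} [Fintype V] (G : SimpleGraph V) (v₀ : V) (j : ℕ)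
    (hC4free : ¬ ∃ s : Set V, Nonempty (G.induce s ≃g SimpleGraph.cycleGraph 4))
    (hdeg : ∀ v : V, (G.neighborSet v).ncard ≤ 3) :
    (∃ D : Set V, IsDomSet G D ∧ D.ncard ≤ j) ↔
      ∃ S : Set (GadgetVertex V (Fintype.card V)),
        S.ncard ≤ j + 1 ∧
          (IsDomSet (gadget G (Fintype.card V) v₀) S ∨
            ∀ s : Set (GadgetVertex V (Fintype.card V)),
              Nonempty ((gadget G (Fintype.card V) v₀).induce s ≃g
                SimpleGraph.cycleGraph 4) →
              (S ∩ s).Nonempty) := by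
  set n := Fintype.card V with hn
  constructor
  · rintro ⟨D, hD, hDcard⟩
    refine ⟨Sum.inl '' D ∪ {gq V n}, ?_, Or.inl ?_⟩
    · calc (Sum.inl '' D ∪ {gq V n}).ncard ≤ (Sum.inl '' D).ncard + ({gq V n} : Set _).ncard :=
            Set.ncard_union_le _ _
        _ ≤ j + 1 := by
            rw [Set.ncard_image_of_injective _ Sum.inl_injective, Set.ncard_singleton]
            omega
    · rintro (v | ⟨i, a⟩ | u | u)
      · rcases hD v with hv | ⟨w, hw, hadj⟩
        · exact Or.inl (Or.inl ⟨v, hv, rfl⟩)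
        · exact Or.inr ⟨Sum.inl w, Or.inl ⟨w, hw, rfl⟩, gadget_adj_inl.2 hadj⟩
      · exact Or.inr ⟨gq V n, Or.inr rfl, gadget_adj_cyc_q⟩
      · exact Or.inl (Or.inr rfl)
      · exact Or.inr ⟨gq V n, Or.inr rfl, gadget_adj_q'_q⟩
  · rintro ⟨S, hScard, hS | hS⟩
    · -- dominating case
      by_cases hj : n ≤ j
      · exact ⟨Set.univ, fun v => Or.inl trivial, by
          rw [Set.ncard_univ]; simpa using hj⟩
      -- q ∈ S
      have hq : gq V n ∈ S := by
        by_contra hq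
        have hhit : ∀ i : Fin (n + 2), (S ∩ cycSet V n i).Nonempty := by
          intro i
          rcases hS (Sum.inr (Sum.inl (i, 0))) with hmem | ⟨w, hw, hadj⟩
          · exact ⟨_, hmem, 0, rfl⟩
          · rcases w with v | ⟨i', a⟩ | u | u
            · rw [gadget, SimpleGraph.fromRel_adj] at hadj
              simp at hadj
            · obtain ⟨rfl, -⟩ := gadget_adj_cyc.1 hadj
              exact ⟨_, hw, a, rfl⟩
            · exact absurd hw hq
            · rw [gadget, SimpleGraph.fromRel_adj] at hadj
              simp at hadj
        have := hit_card hhit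
        omega
      -- build D
      set f : GadgetVertex V n → V := Sum.elim id (fun _ => v₀) with hf
      set D : Set V := {v | Sum.inl v ∈ S ∨ (v = v₀ ∧ gq' V n ∈ S)} with hDdef
      have hDsub : D ⊆ f '' (S \ {gq V n}) := by
        rintro v (hv | ⟨rfl, hv⟩)
        · exact ⟨Sum.inl v, ⟨hv, by simp [gq]⟩, rfl⟩
        · exact ⟨gq' V n, ⟨hv, by simp [gq, gq']⟩, rfl⟩
      refine ⟨D, ?_, ?_⟩
      · intro v
        rcases hS (Sum.inl v) with hv | ⟨w, hw, hadj⟩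
        · exact Or.inl (Or.inl hv)
        · rcases w with u | ⟨i, a⟩ | u | u
          · exact Or.inr ⟨u, Or.inl hw, gadget_adj_inl.1 hadj⟩
          · rw [gadget, SimpleGraph.fromRel_adj] at hadj
            simp at hadj
          · rw [gadget, SimpleGraph.fromRel_adj] at hadj
            simp at hadj
          · rw [gadget, SimpleGraph.fromRel_adj] at hadj
            obtain ⟨-, h | h⟩ := hadj
            · exact absurd h (by simp)
            · exact Or.inl (Or.inr ⟨h, hw⟩)
      · calc D.ncard ≤ (f '' (S \ {gq V n})).ncard := Set.ncard_le_ncard hDsub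
          _ ≤ (S \ {gq V n}).ncard := Set.ncard_image_le
          _ = S.ncard - 1 := Set.ncard_diff_singleton_of_mem hq
          _ ≤ j := by omega
    · -- hitting case
      by_cases hj : n ≤ j
      · exact ⟨Set.univ, fun v => Or.inl trivial, by
          rw [Set.ncard_univ]; simpa using hj⟩
      have hhit : ∀ i : Fin (n + 2), (S ∩ cycSet V n i).Nonempty :=
        fun i => hS _ (cyc_iso i)
      have := hit_card hhit
      omega
end
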